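/- arXiv:1407.6208 — 7 statements merged into one kernel-verified Lean document; each statement's English description precedes it below -/
import Mathlib

section
/- Let t ∈ ℝ, r ≥ 1, and let S_r be as in the context, and set C₀ := max{8, 16/λ̲}. Then for every s with t ≤ s ≤ t + 2 and every v ∈ H^t, ‖B^{−1}v − S_r(B)v‖_s ≤ C₀ · e^{−(2−(s−t))·π·√r/2} · ‖v‖_t; equivalently, for every ξ ∈ [0,2] and every v ∈ H^t, ( Σ_{ν∈ℕ^d} λ_ν^{t+ξ} · (λ_ν^{−1} − S_r(λ_ν))² · v_ν² )^{1/2} ≤ C₀ · e^{−(2−ξ)·π·√r/2} · ‖v‖_t. -/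
open scoped ENNReal
open Filter

/-- `λ_ν = λ_{1,ν_1} + ⋯ + λ_{d,ν_d}` (indices `0`-based in Lean, `1`-based in the paper). -/
noncomputable def lamNu (d : ℕ) (lam : Fin d → ℕ → ℝ) (ν : Fin d → ℕ) : ℝ :=
  ∑ j, lam j (ν j)

/-- The `H^s` norm `(Σ_ν λ_ν^s v_ν²)^{1/2}`, as an extended nonnegative real. -/
noncomputable def hnorm (d : ℕ) (lam : Fin d → ℕ → ℝ) (s : ℝ) (v : (Fin d → ℕ) → ℝ) : ℝ≥0∞ :=
  (∑' ν : Fin d → ℕ, ENNReal.ofReal (lamNu d lam ν ^ s * v ν ^ 2)) ^ (1 / 2 : ℝ)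

/-- membership in `H^s`. -/
def MemH (d : ℕ) (lam : Fin d → ℕ → ℝ) (s : ℝ) (v : (Fin d → ℕ) → ℝ) : Prop :=
  hnorm d lam s v < ⊤

/-- `λ̲ = λ_{(1,…,1)}`, the smallest of the `λ_ν`. -/
noncomputable def lamMin (d : ℕ) (lam : Fin d → ℕ → ℝ) : ℝ := lamNu d lam (fun _ => 0)

/-- A rank-one tensor: `τ_ν = ∏_j c_j(ν_j)`. -/
def IsRankOne (d : ℕ) (τ : (Fin d → ℕ) → ℝ) : Prop :=
  ∃ c : Fin d → ℕ → ℝ, ∀ ν, τ ν = ∏ j, c j (ν j)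

lemma key_pointwise (R lmin lam S ξ : ℝ) (hR : 0 ≤ R) (hlmin : 0 < lmin)
    (hlam : lmin ≤ lam) (hSnn : 0 ≤ S)
    (h1 : |1 / lam - S| ≤ 16 / lmin * Real.exp (-R))
    (h2 : 1 / 8 * Real.exp R ≤ lam → S ≤ 1 / lam)
    (hξ0 : 0 ≤ ξ) (hξ2 : ξ ≤ 2) :
    lam ^ ξ * (1 / lam - S) ^ 2 ≤
      (max 8 (16 / lmin)) ^ 2 * Real.exp (-(2 - ξ) * R) := by
  have hlam0 : (0:ℝ) < lam := hlmin.trans_le hlam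
  set C := max 8 (16 / lmin) with hC
  have hC8 : (8:ℝ) ≤ C := le_max_left _ _
  have hC16 : 16 / lmin ≤ C := le_max_right _ _
  have hC0 : (0:ℝ) < C := by linarith
  rcases le_or_gt lam (1/8 * Real.exp R) with hcase | hcase
  · have h3 : lam ^ ξ ≤ (1/8 * Real.exp R) ^ ξ :=
      Real.rpow_le_rpow hlam0.le hcase hξ0
    have h4 : (1/8 * Real.exp R : ℝ) ^ ξ ≤ Real.exp (R * ξ) := by
      rw [Real.mul_rpow (by norm_num) (Real.exp_pos R).le, ← Real.exp_mul]
      have h18 : (1/8:ℝ) ^ ξ ≤ 1 := Real.rpow_le_one (by norm_num) (by norm_num) hξ0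
      have h18n : (0:ℝ) ≤ (1/8:ℝ) ^ ξ := Real.rpow_nonneg (by norm_num) _
      nlinarith [Real.exp_pos (R * ξ)]
    have hb : |1/lam - S| ≤ C * Real.exp (-R) := by
      refine h1.trans ?_
      have := (Real.exp_pos (-R)).le
      nlinarith
    have h5 : (1 / lam - S) ^ 2 ≤ (C * Real.exp (-R))^2 := by
      have ha := abs_nonneg (1/lam - S)
      calc (1/lam - S)^2 = |1/lam - S|^2 := (sq_abs _).symm
        _ ≤ (C * Real.exp (-R))^2 := by nlinarith
    calc lam ^ ξ * (1 / lam - S) ^ 2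
        ≤ Real.exp (R * ξ) * (C * Real.exp (-R))^2 := by
          apply mul_le_mul (h3.trans h4) h5 (sq_nonneg _) (Real.exp_pos _).le
      _ = C^2 * (Real.exp (R * ξ) * (Real.exp (-R) * Real.exp (-R))) := by ring
      _ = C^2 * Real.exp (-(2 - ξ) * R) := by
          rw [← Real.exp_add, ← Real.exp_add]; ring_nf
  · have hE0 : 0 ≤ 1/lam - S := by
      have := h2 hcase.le; linarith
    have hE1 : 1/lam - S ≤ 1/lam := by linarith
    have h6 : lam ^ ξ * (1 / lam - S) ^ 2 ≤ lam ^ (ξ - 2) := by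
      have hrw : lam ^ (ξ - 2) = lam ^ ξ * (1/lam)^2 := by
        rw [Real.rpow_sub hlam0]
        rw [show lam ^ (2:ℝ) = lam ^ (2:ℕ) by
          rw [← Real.rpow_natCast]; norm_num]
        field_simp
      rw [hrw]
      have hlξ : (0:ℝ) ≤ lam ^ ξ := Real.rpow_nonneg hlam0.le _
      have : (1/lam - S)^2 ≤ (1/lam)^2 := by nlinarith
      nlinarith
    have h7 : lam ^ (ξ - 2) ≤ (1/8 * Real.exp R) ^ (ξ - 2) :=
      Real.rpow_le_rpow_of_nonpos (by positivity) hcase.le (by linarith)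
    have h8 : (1/8 * Real.exp R : ℝ) ^ (ξ - 2) ≤ 64 * Real.exp (-(2 - ξ) * R) := by
      rw [Real.mul_rpow (by norm_num) (Real.exp_pos R).le, ← Real.exp_mul]
      have e1 : ((1:ℝ)/8) ^ (ξ - 2) = (8:ℝ) ^ (2 - ξ) := by
        rw [show (1/8:ℝ) = 8⁻¹ by norm_num, ← Real.rpow_neg_one,
          ← Real.rpow_mul (by norm_num : (0:ℝ) ≤ 8)]
        congr 1; ring
      rw [e1]
      have e2 : (8:ℝ) ^ (2 - ξ) ≤ 64 := by
        calc (8:ℝ) ^ (2 - ξ) ≤ (8:ℝ) ^ (2:ℝ) :=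
              Real.rpow_le_rpow_of_exponent_le (by norm_num) (by linarith)
          _ = 64 := by
              rw [show (2:ℝ) = ((2:ℕ):ℝ) by norm_num, Real.rpow_natCast]; norm_num
      have e3 : Real.exp (R * (ξ - 2)) = Real.exp (-(2 - ξ) * R) := by ring_nf
      rw [e3]
      have : (0:ℝ) < Real.exp (-(2 - ξ) * R) := Real.exp_pos _
      nlinarith
    have h9 : (64:ℝ) ≤ C^2 := by nlinarith
    have hep : (0:ℝ) < Real.exp (-(2 - ξ) * R) := Real.exp_pos _
    nlinarith [h6.trans (h7.trans h8)]


/-- Proposition 5.5 (i)-(ii) of the paper: with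
`C₀ = max{8, 16/λ̲}` and an exponential sum `S_r(x) = Σ_k ω_k e^{−α_k x}` satisfying
`|1/x − S_r(x)| ≤ (16/λ̲) e^{−π√r}` for `x ≥ λ̲` and `S_r(x) ≤ 1/x` for
`x ≥ (1/8)e^{π√r}`, one has, for `t ≤ s ≤ t+2` and `v ∈ H^t`,
`‖B⁻¹v − S_r(B)v‖_s ≤ C₀ e^{−(2−(s−t))π√r/2} ‖v‖_t`. -/
theorem approximate_inverse_error
    (d : ℕ) (hd : 0 < d) (lam : Fin d → ℕ → ℝ)
    (hpos : ∀ j n, 0 < lam j n) (hmono : ∀ j, Monotone (lam j))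
    (htend : ∀ j, Tendsto (lam j) atTop atTop)
    (r : ℕ) (hr : 1 ≤ r) (ω a : Fin r → ℝ)
    (hω : ∀ k, 0 < ω k) (ha : ∀ k, 0 < a k)
    (hS1 : ∀ x : ℝ, lamMin d lam ≤ x →
      |1 / x - ∑ k, ω k * Real.exp (-(a k) * x)|
        ≤ (16 / lamMin d lam) * Real.exp (-Real.pi * Real.sqrt r))
    (hS2 : ∀ x : ℝ, (1 / 8) * Real.exp (Real.pi * Real.sqrt r) ≤ x →
      ∑ k, ω k * Real.exp (-(a k) * x) ≤ 1 / x)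
    (t : ℝ) :
    ∀ s : ℝ, t ≤ s → s ≤ t + 2 → ∀ v : (Fin d → ℕ) → ℝ,
      hnorm d lam s (fun ν =>
          v ν / lamNu d lam ν - (∑ k, ω k * Real.exp (-(a k) * lamNu d lam ν)) * v ν)
        ≤ ENNReal.ofReal (max 8 (16 / lamMin d lam) *
            Real.exp (-(2 - (s - t)) * Real.pi * Real.sqrt r / 2)) * hnorm d lam t v := by
  
  intro s hts hst2 v
  set R := Real.pi * Real.sqrt r with hRdef
  have hRnn : 0 ≤ R := by positivity
  set C := max 8 (16 / lamMin d lam) with hCdef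
  have hlmin_pos : 0 < lamMin d lam := by
    unfold lamMin lamNu
    exact Finset.sum_pos (fun j _ => hpos j 0)
      (Finset.univ_nonempty_iff.mpr ⟨⟨0, hd⟩⟩)
  have hlam_ge : ∀ ν : Fin d → ℕ, lamMin d lam ≤ lamNu d lam ν := by
    intro ν; unfold lamMin lamNu
    exact Finset.sum_le_sum (fun j _ => hmono j (Nat.zero_le _))
  have hlamν_pos : ∀ ν, 0 < lamNu d lam ν := fun ν => hlmin_pos.trans_le (hlam_ge ν)
  have hCpos : (0:ℝ) < C := lt_of_lt_of_le (by norm_num) (le_max_left _ _)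
  set K := C * Real.exp (-(2 - (s - t)) * Real.pi * Real.sqrt r / 2) with hKdef
  have hKpos : 0 < K := by positivity
  have hK2 : K ^ 2 = C ^ 2 * Real.exp (-(2 - (s - t)) * R) := by
    rw [hKdef, mul_pow, sq (Real.exp _), ← Real.exp_add, hRdef]
    ring_nf
  have hpt : ∀ ν : Fin d → ℕ,
      lamNu d lam ν ^ s * (v ν / lamNu d lam ν -
        (∑ k, ω k * Real.exp (-(a k) * lamNu d lam ν)) * v ν) ^ 2
        ≤ K ^ 2 * (lamNu d lam ν ^ t * v ν ^ 2) := by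
    intro ν
    set L := lamNu d lam ν with hLdef
    set S := ∑ k, ω k * Real.exp (-(a k) * L) with hSdef
    have hL : 0 < L := hlamν_pos ν
    have hSnn : 0 ≤ S :=
      Finset.sum_nonneg fun k _ => le_of_lt (mul_pos (hω k) (Real.exp_pos _))
    have hkey := key_pointwise R (lamMin d lam) L S (s - t) hRnn hlmin_pos
      (hlam_ge ν) hSnn
      (by have := hS1 L (hlam_ge ν); rw [neg_mul] at this; exact this)
      (fun h => hS2 L (by rw [hRdef] at h; exact h))
      (by linarith) (by linarith)
    have herr : v ν / L - S * v ν = (1/L - S) * v ν := by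
      field_simp
    have hsplit : L ^ s = L ^ t * L ^ (s - t) := by
      rw [← Real.rpow_add hL]; ring_nf
    rw [herr, hsplit, hK2]
    calc L ^ t * L ^ (s - t) * ((1/L - S) * v ν) ^ 2
        = (L ^ (s - t) * (1/L - S) ^ 2) * (L ^ t * v ν ^ 2) := by ring
      _ ≤ (C ^ 2 * Real.exp (-(2 - (s - t)) * R)) * (L ^ t * v ν ^ 2) := by
          apply mul_le_mul_of_nonneg_right hkey
          exact mul_nonneg (Real.rpow_nonneg hL.le _) (sq_nonneg _)
  -- assemble in ℝ≥0∞
  unfold hnorm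
  have step : ∀ ν : Fin d → ℕ,
      ENNReal.ofReal (lamNu d lam ν ^ s * (v ν / lamNu d lam ν -
        (∑ k, ω k * Real.exp (-(a k) * lamNu d lam ν)) * v ν) ^ 2)
      ≤ ENNReal.ofReal (K ^ 2) * ENNReal.ofReal (lamNu d lam ν ^ t * v ν ^ 2) := by
    intro ν
    rw [← ENNReal.ofReal_mul (by positivity)]
    exact ENNReal.ofReal_le_ofReal (hpt ν)
  have hhalf : (0:ℝ) ≤ 1/2 := by norm_num
  have hroot : (ENNReal.ofReal (K ^ 2)) ^ (1/2 : ℝ) = ENNReal.ofReal K := by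
    rw [sq, ENNReal.ofReal_mul hKpos.le,
      ENNReal.mul_rpow_of_nonneg _ _ hhalf,
      ← ENNReal.rpow_add _ _ (by simp [ENNReal.ofReal_pos.mpr hKpos, ne_of_gt])
        ENNReal.ofReal_ne_top]
    norm_num
  calc (∑' ν : Fin d → ℕ, ENNReal.ofReal (lamNu d lam ν ^ s * (v ν / lamNu d lam ν -
        (∑ k, ω k * Real.exp (-(a k) * lamNu d lam ν)) * v ν) ^ 2)) ^ (1/2 : ℝ)
      ≤ (∑' ν : Fin d → ℕ, ENNReal.ofReal (K ^ 2) *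
          ENNReal.ofReal (lamNu d lam ν ^ t * v ν ^ 2)) ^ (1/2 : ℝ) :=
        ENNReal.rpow_le_rpow (ENNReal.tsum_le_tsum step) hhalf
    _ = (ENNReal.ofReal (K ^ 2) *
          ∑' ν : Fin d → ℕ, ENNReal.ofReal (lamNu d lam ν ^ t * v ν ^ 2)) ^ (1/2 : ℝ) := by
        rw [ENNReal.tsum_mul_left]
    _ = (ENNReal.ofReal (K ^ 2)) ^ (1/2 : ℝ) *
          (∑' ν : Fin d → ℕ, ENNReal.ofReal (lamNu d lam ν ^ t * v ν ^ 2)) ^ (1/2 : ℝ) :=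
        ENNReal.mul_rpow_of_nonneg _ _ hhalf
    _ = ENNReal.ofReal K *
          (∑' ν : Fin d → ℕ, ENNReal.ofReal (lamNu d lam ν ^ t * v ν ^ 2)) ^ (1/2 : ℝ) := by
        rw [hroot]
end

section
/- Fix a̲ ∈ (0, π) and let t' ∈ ℝ and s ∈ ℝ satisfy t' ≤ s < t' + 2. Then there exists a constant C̄₀, depending only on λ̲, s − t' and a̲, such that for every r ≥ 1, every S̄_r as in the context, and every v ∈ H^{t'}, ‖B^{−1}v − S̄_r(B)v‖_s ≤ C̄₀ · e^{−(2−(s−t'))·a̲·√r/2} · ‖v‖_{t'}. -/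
open scoped ENNReal
open Filter

private lemma exp_quad_bound (ε R : ℝ) (hε : 0 < ε) (hR : 0 ≤ R) :
    R ^ 2 * Real.exp (-(ε * R)) ≤ 4 / ε ^ 2 := by
  have hE := Real.add_one_le_exp (ε * R / 2)
  have hEE : Real.exp (ε * R / 2) * Real.exp (ε * R / 2) = Real.exp (ε * R) := by
    rw [← Real.exp_add]; ring_nf
  have key : ε ^ 2 * R ^ 2 ≤ 4 * Real.exp (ε * R) := by nlinarith [mul_nonneg hε.le hR]
  have hP : (0:ℝ) < Real.exp (-(ε * R)) := Real.exp_pos _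
  have hQP : Real.exp (ε * R) * Real.exp (-(ε * R)) = 1 := by
    rw [← Real.exp_add]; simp
  rw [le_div_iff₀ (by positivity)]
  nlinarith [key, hP]

private lemma pointwise_bound
    (lm : ℝ) (hlm : 0 < lm) (aL : ℝ) (ha0 : 0 < aL) (haπ : aL < Real.pi)
    (δ : ℝ) (hδ0 : 0 ≤ δ) (hδ2 : δ < 2)
    (r : ℕ) (hr : 1 ≤ r) (S : ℝ → ℝ) (hS0 : ∀ x, 0 ≤ S x)
    (hap : ∀ x : ℝ, lm ≤ x → |1 / x - S x| ≤ (16 / lm + 8 * r * Real.exp 1) * Real.exp (-Real.pi * Real.sqrt r))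
    (htl : ∀ x : ℝ, (1 / 8) * Real.exp (Real.pi * Real.sqrt r) ≤ x → S x ≤ 1 / x)
    (x : ℝ) (hx : lm ≤ x) :
    x ^ (δ / 2) * |1 / x - S x| ≤
      ((16 / lm + 8 * Real.exp 1 + 8) * (4 / ((2 - δ) * (Real.pi - aL) / 2) ^ 2)) *
        Real.exp (-(2 - δ) * aL * Real.sqrt r / 2) := by
  set R := Real.sqrt r with hRdef
  have hR1 : 1 ≤ R := by
    rw [hRdef, show (1:ℝ) = Real.sqrt 1 by simp]
    exact Real.sqrt_le_sqrt (by exact_mod_cast hr)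
  have hR0 : 0 ≤ R := le_trans zero_le_one hR1
  have hx0 : 0 < x := lt_of_lt_of_le hlm hx
  have hεpos : 0 < (2 - δ) * (Real.pi - aL) / 2 := by
    have : 0 < 2 - δ := by linarith
    have : 0 < Real.pi - aL := by linarith
    positivity
  have hr1 : (1:ℝ) ≤ r := by exact_mod_cast hr
  -- common bound
  have hmid : x ^ (δ / 2) * |1 / x - S x| ≤
      (16 / lm + 8 * r * Real.exp 1 + 8) * Real.exp (-((2 - δ) * Real.pi * R / 2)) := by
    rcases le_or_gt x ((1 / 8) * Real.exp (Real.pi * R)) with hxX | hxX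
    · have h1 : x ^ (δ / 2) ≤ Real.exp (Real.pi * R * (δ / 2)) := by
        calc x ^ (δ / 2) ≤ (Real.exp (Real.pi * R)) ^ (δ / 2) := by
              apply Real.rpow_le_rpow hx0.le _ (by positivity)
              nlinarith [Real.exp_pos (Real.pi * R)]
          _ = Real.exp (Real.pi * R * (δ / 2)) := by rw [← Real.exp_mul]
      have h2 := hap x hx
      have hsplit : Real.exp (Real.pi * R * (δ / 2)) * Real.exp (-Real.pi * R)
          = Real.exp (-((2 - δ) * Real.pi * R / 2)) := by
        rw [← Real.exp_add]; congr 1; ring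
      calc x ^ (δ / 2) * |1 / x - S x|
          ≤ Real.exp (Real.pi * R * (δ / 2)) * ((16 / lm + 8 * r * Real.exp 1) * Real.exp (-Real.pi * R)) :=
            mul_le_mul h1 h2 (abs_nonneg _) (Real.exp_pos _).le
        _ = (16 / lm + 8 * r * Real.exp 1) * Real.exp (-((2 - δ) * Real.pi * R / 2)) := by
            rw [← hsplit]; ring
        _ ≤ (16 / lm + 8 * r * Real.exp 1 + 8) * Real.exp (-((2 - δ) * Real.pi * R / 2)) :=
            mul_le_mul_of_nonneg_right (by linarith) (Real.exp_pos _).le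
    · have hXx : (1 / 8) * Real.exp (Real.pi * R) ≤ x := hxX.le
      have hS := htl x hXx
      have habs : |1 / x - S x| = 1 / x - S x := abs_of_nonneg (by linarith)
      have hXpos : 0 < (1 / 8) * Real.exp (Real.pi * R) := by positivity
      have h2 : x ^ (δ / 2) * |1 / x - S x| ≤ x ^ (δ / 2 - 1) := by
        rw [habs]
        have he : x ^ (δ / 2 - 1) = x ^ (δ / 2) * (1 / x) := by
          rw [Real.rpow_sub hx0, Real.rpow_one]; ring
        rw [he]
        have := hS0 x
        have := Real.rpow_nonneg hx0.le (δ / 2)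
        nlinarith
      have h3 : x ^ (δ / 2 - 1) ≤ ((1 / 8) * Real.exp (Real.pi * R)) ^ (δ / 2 - 1) :=
        Real.rpow_le_rpow_of_nonpos hXpos hXx (by linarith)
      have h4 : ((1 / 8) * Real.exp (Real.pi * R)) ^ (δ / 2 - 1)
          ≤ 8 * Real.exp (-((2 - δ) * Real.pi * R / 2)) := by
        rw [Real.rpow_sub hXpos, Real.rpow_one, div_le_iff₀ hXpos]
        have hXle : ((1 / 8) * Real.exp (Real.pi * R)) ^ (δ / 2) ≤ Real.exp (Real.pi * R * (δ / 2)) := by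
          calc ((1 / 8) * Real.exp (Real.pi * R)) ^ (δ / 2)
              ≤ (Real.exp (Real.pi * R)) ^ (δ / 2) := by
                apply Real.rpow_le_rpow hXpos.le _ (by positivity)
                nlinarith [Real.exp_pos (Real.pi * R)]
            _ = Real.exp (Real.pi * R * (δ / 2)) := by rw [← Real.exp_mul]
        calc ((1 / 8) * Real.exp (Real.pi * R)) ^ (δ / 2)
            ≤ Real.exp (Real.pi * R * (δ / 2)) := hXle
          _ = 8 * Real.exp (-((2 - δ) * Real.pi * R / 2)) * ((1 / 8) * Real.exp (Real.pi * R)) := by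
              rw [show (8:ℝ) * Real.exp (-((2 - δ) * Real.pi * R / 2)) * ((1 / 8) * Real.exp (Real.pi * R))
                  = Real.exp (-((2 - δ) * Real.pi * R / 2)) * Real.exp (Real.pi * R) by ring,
                ← Real.exp_add]
              congr 1; ring
      calc x ^ (δ / 2) * |1 / x - S x| ≤ 8 * Real.exp (-((2 - δ) * Real.pi * R / 2)) :=
            le_trans h2 (le_trans h3 h4)
        _ ≤ (16 / lm + 8 * r * Real.exp 1 + 8) * Real.exp (-((2 - δ) * Real.pi * R / 2)) := by
            apply mul_le_mul_of_nonneg_right _ (Real.exp_pos _).le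
            have := Real.exp_pos 1
            nlinarith [div_pos (by norm_num : (0:ℝ) < 16) hlm]
  -- now the scalar chain
  have hK : 16 / lm + 8 * (r:ℝ) * Real.exp 1 + 8 ≤ (16 / lm + 8 * Real.exp 1 + 8) * r := by
    have h16 : 0 < 16 / lm := by positivity
    nlinarith [Real.exp_pos 1]
  have hsplit2 : Real.exp (-((2 - δ) * Real.pi * R / 2))
      = Real.exp (-(((2 - δ) * (Real.pi - aL) / 2) * R)) * Real.exp (-(2 - δ) * aL * R / 2) := by
    rw [← Real.exp_add]; congr 1; ring
  have hpoly : (r:ℝ) * Real.exp (-(((2 - δ) * (Real.pi - aL) / 2) * R))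
      ≤ 4 / ((2 - δ) * (Real.pi - aL) / 2) ^ 2 := by
    have hr2 : (r:ℝ) = R ^ 2 := by rw [hRdef, Real.sq_sqrt (by positivity)]
    rw [hr2]
    exact exp_quad_bound _ R hεpos hR0
  calc x ^ (δ / 2) * |1 / x - S x|
      ≤ (16 / lm + 8 * r * Real.exp 1 + 8) * Real.exp (-((2 - δ) * Real.pi * R / 2)) := hmid
    _ ≤ ((16 / lm + 8 * Real.exp 1 + 8) * r) * Real.exp (-((2 - δ) * Real.pi * R / 2)) := by
        gcongr
    _ = (16 / lm + 8 * Real.exp 1 + 8) *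
          ((r:ℝ) * Real.exp (-(((2 - δ) * (Real.pi - aL) / 2) * R))) * Real.exp (-(2 - δ) * aL * R / 2) := by
        rw [hsplit2]; ring
    _ ≤ (16 / lm + 8 * Real.exp 1 + 8) * (4 / ((2 - δ) * (Real.pi - aL) / 2) ^ 2) *
          Real.exp (-(2 - δ) * aL * R / 2) := by
        have hC : 0 < 16 / lm + 8 * Real.exp 1 + 8 := by positivity
        gcongr
    _ = ((16 / lm + 8 * Real.exp 1 + 8) * (4 / ((2 - δ) * (Real.pi - aL) / 2) ^ 2)) *
          Real.exp (-(2 - δ) * aL * R / 2) := by ring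

/-- Proposition 6.1 of the paper: error bound for the thresholded
approximate inverse `S̄_r(B)`.  For fixed `a̲ ∈ (0,π)` and `t' ≤ s < t' + 2` there is a
constant `C̄₀`, depending only on `λ̲`, `s − t'` and `a̲`, such that for every `r ≥ 1`,
every admissible `S̄_r` and every `v ∈ H^{t'}`,
`‖B⁻¹v − S̄_r(B)v‖_s ≤ C̄₀ e^{−(2−(s−t'))a̲√r/2} ‖v‖_{t'}`. -/
theorem thresholded_approximate_inverse_error
    (d : ℕ) (hd : 0 < d) (lam : Fin d → ℕ → ℝ)
    (hpos : ∀ j n, 0 < lam j n) (hmono : ∀ j, Monotone (lam j))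
    (htend : ∀ j, Tendsto (lam j) atTop atTop)
    (aLow : ℝ) (haLow0 : 0 < aLow) (haLow : aLow < Real.pi)
    (t' s : ℝ) (hts : t' ≤ s) (hst : s < t' + 2) :
    ∃ C : ℝ, 0 < C ∧
      ∀ r : ℕ, 1 ≤ r → ∀ ω a : Fin r → ℝ,
        (∀ k, 0 ≤ ω k) → (∀ k, 0 < a k) →
        (∀ k, 0 < ω k → 8 * Real.exp (-Real.pi * Real.sqrt r) ≤ a k) →
        (∀ x : ℝ, lamMin d lam ≤ x →
          |1 / x - ∑ k, ω k * Real.exp (-(a k) * x)|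
            ≤ (16 / lamMin d lam + 8 * r * Real.exp 1) * Real.exp (-Real.pi * Real.sqrt r)) →
        (∀ x : ℝ, (1 / 8) * Real.exp (Real.pi * Real.sqrt r) ≤ x →
          ∑ k, ω k * Real.exp (-(a k) * x) ≤ 1 / x) →
        ∀ v : (Fin d → ℕ) → ℝ,
          hnorm d lam s (fun ν =>
              v ν / lamNu d lam ν - (∑ k, ω k * Real.exp (-(a k) * lamNu d lam ν)) * v ν)
            ≤ ENNReal.ofReal (C * Real.exp (-(2 - (s - t')) * aLow * Real.sqrt r / 2)) *
                hnorm d lam t' v := by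
  have hne : Nonempty (Fin d) := Fin.pos_iff_nonempty.mp hd
  have hlm : 0 < lamMin d lam := by
    unfold lamMin lamNu
    exact Finset.sum_pos (fun j _ => hpos j 0) Finset.univ_nonempty
  have hδ0 : 0 ≤ s - t' := by linarith
  have hδ2 : s - t' < 2 := by linarith
  have hεpos : 0 < (2 - (s - t')) * (Real.pi - aLow) / 2 := by
    have h1 : 0 < 2 - (s - t') := by linarith
    have h2 : 0 < Real.pi - aLow := by linarith
    positivity
  refine ⟨(16 / lamMin d lam + 8 * Real.exp 1 + 8) *
      (4 / ((2 - (s - t')) * (Real.pi - aLow) / 2) ^ 2), by positivity, ?_⟩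
  intro r hr ω a hω ha hthr hap htl v
  set Cexp : ℝ := (16 / lamMin d lam + 8 * Real.exp 1 + 8) *
      (4 / ((2 - (s - t')) * (Real.pi - aLow) / 2) ^ 2) *
      Real.exp (-(2 - (s - t')) * aLow * Real.sqrt r / 2) with hCexpdef
  have hCexp0 : 0 ≤ Cexp := by positivity
  have hS0 : ∀ x : ℝ, 0 ≤ ∑ k, ω k * Real.exp (-(a k) * x) := fun x =>
    Finset.sum_nonneg fun k _ => mul_nonneg (hω k) (Real.exp_pos _).le
  have hterm : ∀ ν : Fin d → ℕ,
      ENNReal.ofReal (lamNu d lam ν ^ s *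
        (v ν / lamNu d lam ν - (∑ k, ω k * Real.exp (-(a k) * lamNu d lam ν)) * v ν) ^ 2)
      ≤ ENNReal.ofReal (Cexp ^ 2) * ENNReal.ofReal (lamNu d lam ν ^ t' * v ν ^ 2) := by
    intro ν
    rw [← ENNReal.ofReal_mul (sq_nonneg _)]
    apply ENNReal.ofReal_le_ofReal
    have hLpos : 0 < lamNu d lam ν := by
      unfold lamNu
      exact Finset.sum_pos (fun j _ => hpos j _) Finset.univ_nonempty
    have hLlm : lamMin d lam ≤ lamNu d lam ν := by
      unfold lamMin lamNu
      exact Finset.sum_le_sum fun j _ => hmono j (Nat.zero_le _)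
    have hpt := pointwise_bound (lamMin d lam) hlm aLow haLow0 haLow (s - t') hδ0 hδ2
      r hr (fun x => ∑ k, ω k * Real.exp (-(a k) * x)) hS0 hap htl (lamNu d lam ν) hLlm
    set L : ℝ := lamNu d lam ν
    set E : ℝ := 1 / L - ∑ k, ω k * Real.exp (-(a k) * L) with hEdef
    have hsq : (L ^ ((s - t') / 2)) ^ 2 * E ^ 2 ≤ Cexp ^ 2 := by
      calc (L ^ ((s - t') / 2)) ^ 2 * E ^ 2 = (L ^ ((s - t') / 2) * |E|) ^ 2 := by
            rw [mul_pow, sq_abs]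
        _ ≤ Cexp ^ 2 := by
            apply pow_le_pow_left₀ (by positivity) _ 2
            exact hpt
    have hsexp : L ^ s = L ^ t' * (L ^ ((s - t') / 2)) ^ 2 := by
      rw [← Real.rpow_natCast (L ^ ((s - t') / 2)) 2, ← Real.rpow_mul hLpos.le,
        ← Real.rpow_add hLpos]
      congr 1
      push_cast
      ring
    have heq : v ν / L - (∑ k, ω k * Real.exp (-(a k) * L)) * v ν = E * v ν := by
      rw [hEdef]; ring
    rw [heq, hsexp]
    calc L ^ t' * (L ^ ((s - t') / 2)) ^ 2 * (E * v ν) ^ 2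
        = ((L ^ ((s - t') / 2)) ^ 2 * E ^ 2) * (L ^ t' * v ν ^ 2) := by ring
      _ ≤ Cexp ^ 2 * (L ^ t' * v ν ^ 2) := by
          apply mul_le_mul_of_nonneg_right hsq
          exact mul_nonneg (Real.rpow_nonneg hLpos.le _) (sq_nonneg _)
  show hnorm d lam s _ ≤ ENNReal.ofReal Cexp * hnorm d lam t' v
  unfold hnorm
  calc (∑' ν : Fin d → ℕ, ENNReal.ofReal (lamNu d lam ν ^ s *
          (v ν / lamNu d lam ν - (∑ k, ω k * Real.exp (-(a k) * lamNu d lam ν)) * v ν) ^ 2)) ^ (1/2 : ℝ)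
      ≤ (∑' ν : Fin d → ℕ, ENNReal.ofReal (Cexp ^ 2) *
          ENNReal.ofReal (lamNu d lam ν ^ t' * v ν ^ 2)) ^ (1/2 : ℝ) :=
        ENNReal.rpow_le_rpow (ENNReal.tsum_le_tsum hterm) (by norm_num)
    _ = (ENNReal.ofReal (Cexp ^ 2) *
          ∑' ν : Fin d → ℕ, ENNReal.ofReal (lamNu d lam ν ^ t' * v ν ^ 2)) ^ (1/2 : ℝ) := by
        rw [ENNReal.tsum_mul_left]
    _ = ENNReal.ofReal (Cexp ^ 2) ^ (1/2 : ℝ) *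
          (∑' ν : Fin d → ℕ, ENNReal.ofReal (lamNu d lam ν ^ t' * v ν ^ 2)) ^ (1/2 : ℝ) :=
        ENNReal.mul_rpow_of_nonneg _ _ (by norm_num)
    _ = ENNReal.ofReal Cexp *
          (∑' ν : Fin d → ℕ, ENNReal.ofReal (lamNu d lam ν ^ t' * v ν ^ 2)) ^ (1/2 : ℝ) := by
        rw [ENNReal.ofReal_pow hCexp0, ← ENNReal.rpow_natCast (ENNReal.ofReal Cexp) 2,
          ← ENNReal.rpow_mul]
        norm_num
end

section
/- Let β > 0 and r ≥ 1, and suppose S_r(x) = Σ_{k=1}^r ω_k e^{−α_k x} with all ω_k > 0 and α_k > 0 satisfies |1/x − S_r(x)| ≤ (16/β)·e^{−π√r} for all x ≥ β and S_r(x) ≤ 1/x for all x ≥ T_r := (1/8)e^{π√r}. Define ω̄_k := ω_k if α_k > T_r^{−1} and ω̄_k := 0 otherwise, and set S̄_r(x) := Σ_{k=1}^r ω̄_k e^{−α_k x}. Then: (i) whenever ω̄_k > 0 one has α_k ≥ T_r^{−1}; (ii) S̄_r(x) ≤ S_r(x) ≤ S̄_r(x) + 8re·e^{−π√r} for all x >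 0, and consequently |1/x − S̄_r(x)| ≤ (16/β + 8re)·e^{−π√r} for all x ≥ β; and (iii) S̄_r(x) ≤ 1/x for all x ≥ T_r. -/
/-!
STATEMENT 9: Thresholding the exponents of an exponential sum approximation to `1/x`.
-/

/-- `T_r = (1/8) e^{π√r}`. -/
noncomputable def Tr (r : ℕ) : ℝ := (1 / 8) * Real.exp (Real.pi * Real.sqrt r)

/-- The thresholded weights: `ω̄_k = ω_k` if `α_k > T_r⁻¹`, and `0` otherwise. -/
noncomputable def omegaBar (r : ℕ) (ω a : Fin r → ℝ) (k : Fin r) : ℝ :=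
  if (Tr r)⁻¹ < a k then ω k else 0

theorem thresholded_exponential_sum
    (β : ℝ) (hβ : 0 < β) (r : ℕ) (hr : 1 ≤ r)
    (ω a : Fin r → ℝ) (hω : ∀ k, 0 < ω k) (ha : ∀ k, 0 < a k)
    (h1 : ∀ x : ℝ, β ≤ x →
      |1 / x - ∑ k, ω k * Real.exp (-(a k) * x)|
        ≤ (16 / β) * Real.exp (-Real.pi * Real.sqrt r))
    (h2 : ∀ x : ℝ, Tr r ≤ x → ∑ k, ω k * Real.exp (-(a k) * x) ≤ 1 / x) :
    (∀ k, 0 < omegaBar r ω a k → (Tr r)⁻¹ ≤ a k) ∧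
    (∀ x : ℝ, 0 < x →
      (∑ k, omegaBar r ω a k * Real.exp (-(a k) * x))
          ≤ (∑ k, ω k * Real.exp (-(a k) * x)) ∧
      (∑ k, ω k * Real.exp (-(a k) * x))
          ≤ (∑ k, omegaBar r ω a k * Real.exp (-(a k) * x))
            + 8 * r * Real.exp 1 * Real.exp (-Real.pi * Real.sqrt r)) ∧
    (∀ x : ℝ, β ≤ x →
      |1 / x - ∑ k, omegaBar r ω a k * Real.exp (-(a k) * x)|
        ≤ (16 / β + 8 * r * Real.exp 1) * Real.exp (-Real.pi * Real.sqrt r)) ∧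
    (∀ x : ℝ, Tr r ≤ x →
      ∑ k, omegaBar r ω a k * Real.exp (-(a k) * x) ≤ 1 / x) := by
  set E := Real.exp (-Real.pi * Real.sqrt r) with hE
  have hEpos : 0 < E := Real.exp_pos _
  have hTr : 0 < Tr r := by
    unfold Tr; positivity
  have hTrinv : (Tr r)⁻¹ = 8 * E := by
    rw [hE, Tr, neg_mul, Real.exp_neg]
    rw [mul_inv, one_div, inv_inv]
  -- key bound on dropped weights
  have key : ∀ k, a k ≤ (Tr r)⁻¹ → ω k ≤ 8 * Real.exp 1 * E := by
    intro k hk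
    have hsum := h2 (Tr r) le_rfl
    have hterm : ω k * Real.exp (-(a k) * Tr r)
        ≤ ∑ j, ω j * Real.exp (-(a j) * Tr r) := by
      apply Finset.single_le_sum (f := fun j => ω j * Real.exp (-(a j) * Tr r))
      · intro j _; exact mul_nonneg (hω j).le (Real.exp_pos _).le
      · exact Finset.mem_univ k
    have h3 : ω k * Real.exp (-(a k) * Tr r) ≤ 8 * E := by
      calc ω k * Real.exp (-(a k) * Tr r) ≤ 1 / Tr r := hterm.trans hsum
        _ = 8 * E := by rw [one_div, hTrinv]
    have hak : a k * Tr r ≤ 1 := by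
      calc a k * Tr r ≤ (Tr r)⁻¹ * Tr r := by
            exact mul_le_mul_of_nonneg_right hk hTr.le
        _ = 1 := inv_mul_cancel₀ hTr.ne'
    have hexp : Real.exp (a k * Tr r) ≤ Real.exp 1 := Real.exp_le_exp.2 hak
    have : ω k = ω k * Real.exp (-(a k) * Tr r) * Real.exp (a k * Tr r) := by
      rw [mul_assoc, ← Real.exp_add]; ring_nf; rw [Real.exp_zero, mul_one]
    rw [this]
    calc ω k * Real.exp (-(a k) * Tr r) * Real.exp (a k * Tr r)
        ≤ (8 * E) * Real.exp 1 := by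
          apply mul_le_mul h3 hexp (Real.exp_pos _).le (by positivity)
      _ = 8 * Real.exp 1 * E := by ring
  -- part (ii) for each x > 0
  have part2 : ∀ x : ℝ, 0 < x →
      (∑ k, omegaBar r ω a k * Real.exp (-(a k) * x))
          ≤ (∑ k, ω k * Real.exp (-(a k) * x)) ∧
      (∑ k, ω k * Real.exp (-(a k) * x))
          ≤ (∑ k, omegaBar r ω a k * Real.exp (-(a k) * x))
            + 8 * r * Real.exp 1 * E := by
    intro x hx
    constructor
    · apply Finset.sum_le_sum
      intro k _
      apply mul_le_mul_of_nonneg_right _ (Real.exp_pos _).le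
      unfold omegaBar
      by_cases h : (Tr r)⁻¹ < a k
      · rw [if_pos h]
      · rw [if_neg h]; exact (hω k).le
    · have hdiff : (∑ k, ω k * Real.exp (-(a k) * x))
          - (∑ k, omegaBar r ω a k * Real.exp (-(a k) * x))
          = ∑ k, (ω k - omegaBar r ω a k) * Real.exp (-(a k) * x) := by
        rw [← Finset.sum_sub_distrib]
        congr 1; ext k; ring
      have hbound : ∑ k, (ω k - omegaBar r ω a k) * Real.exp (-(a k) * x)
          ≤ ∑ _k : Fin r, 8 * Real.exp 1 * E := by
        apply Finset.sum_le_sum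
        intro k _
        unfold omegaBar
        by_cases h : (Tr r)⁻¹ < a k
        · rw [if_pos h]
          simp only [sub_self, zero_mul]
          positivity
        · rw [if_neg h]
          push_neg at h
          rw [sub_zero]
          have he1 : Real.exp (-(a k) * x) ≤ 1 := by
            rw [Real.exp_le_one_iff]
            have := (ha k).le
            nlinarith [hx.le]
          calc ω k * Real.exp (-(a k) * x) ≤ ω k * 1 :=
                mul_le_mul_of_nonneg_left he1 (hω k).le
            _ = ω k := mul_one _
            _ ≤ 8 * Real.exp 1 * E := key k h
      have hsum : ∑ _k : Fin r, (8 * Real.exp 1 * E) = 8 * r * Real.exp 1 * E := by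
        rw [Finset.sum_const, Finset.card_univ, Fintype.card_fin, nsmul_eq_mul]
        ring
      have := hbound.trans_eq hsum
      linarith [hdiff, this]
  refine ⟨?_, part2, ?_, ?_⟩
  · intro k hk
    unfold omegaBar at hk
    by_contra hcon
    push_neg at hcon
    rw [if_neg (not_lt.mpr hcon.le)] at hk
    exact lt_irrefl 0 hk
  · intro x hxβ
    have hx : 0 < x := hβ.trans_le hxβ
    obtain ⟨hlo, hhi⟩ := part2 x hx
    have h1x := h1 x hxβ
    rw [abs_sub_le_iff] at h1x ⊢
    constructor
    · calc 1 / x - ∑ k, omegaBar r ω a k * Real.exp (-(a k) * x)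
          ≤ (1 / x - ∑ k, ω k * Real.exp (-(a k) * x)) + 8 * r * Real.exp 1 * E := by
            linarith
        _ ≤ (16 / β) * E + 8 * r * Real.exp 1 * E := by linarith [h1x.1]
        _ = (16 / β + 8 * r * Real.exp 1) * E := by ring
    · calc (∑ k, omegaBar r ω a k * Real.exp (-(a k) * x)) - 1 / x
          ≤ (∑ k, ω k * Real.exp (-(a k) * x)) - 1 / x := by linarith
        _ ≤ (16 / β) * E := h1x.2
        _ ≤ (16 / β + 8 * r * Real.exp 1) * E := by
            apply mul_le_mul_of_nonneg_right _ hEpos.le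
            nlinarith [Real.exp_pos 1, (Nat.one_le_cast (α := ℝ)).mpr hr]
  · intro x hxT
    have hx : 0 < x := hTr.trans_le hxT
    exact ((part2 x hx).1).trans (h2 x hxT)
end

section
/- Let s ≥ 0 and let τ be the rank-one tensor with factors c_1,…,c_d, i.e. τ_ν = ∏_{j=1}^d c_{j,ν_j}. Then, as inequalities in [0,∞], for each j ∈ {1,…,d}: ‖c_j‖_{H_j^s} · ∏_{i≠j} ‖c_i‖_{H_i^0} ≤ ‖τ‖_s, and ‖τ‖_s ≤ (d^{max{0,s−1}})^{1/2} · Σ_{j=1}^d ‖c_j‖_{H_j^s} · ∏_{i≠j} ‖c_i‖_{H_i^0}. In particular, τ ∈ H^s if and only if there is a choice of factors c_1,…,c_d representing τ with c_j ∈ H_j^s for every j. -/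
open scoped ENNReal
open Filter

/-- The low-dimensional `H_j^s` norm `(Σ_n λ_{j,n}^s c_n²)^{1/2}`. -/
noncomputable def hjnorm (d : ℕ) (lam : Fin d → ℕ → ℝ) (j : Fin d) (s : ℝ)
    (c : ℕ → ℝ) : ℝ≥0∞ :=
  (∑' n : ℕ, ENNReal.ofReal (lam j n ^ s * c n ^ 2)) ^ (1 / 2 : ℝ)

/-! ### Auxiliary lemmas -/

lemma tsum_pi_fin_prod : ∀ (d : ℕ) (f : Fin d → ℕ → ℝ≥0∞),
    (∑' ν : Fin d → ℕ, ∏ j, f j (ν j)) = ∏ j, ∑' n, f j n := by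
  intro d
  induction d with
  | zero =>
    intro f
    simp only [Finset.univ_eq_empty, Finset.prod_empty]
    exact tsum_eq_single default (fun b hb => absurd (Subsingleton.elim b default) hb)
  | succ n ih =>
    intro f
    rw [← (Fin.consEquiv (fun _ : Fin (n+1) => ℕ)).tsum_eq (fun ν => ∏ j, f j (ν j)),
      ENNReal.tsum_prod']
    simp only [Fin.consEquiv_apply, Fin.prod_univ_succ, Fin.cons_zero, Fin.cons_succ]
    simp only [ENNReal.tsum_mul_left, ENNReal.tsum_mul_right]
    rw [ih (fun j => f j.succ)]

lemma rpow_sum_le_sum_rpow' {ι : Type*} (t : Finset ι) (ht : t.Nonempty) (z : ι → ℝ≥0∞)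
    {p : ℝ} (h0 : 0 ≤ p) (h1 : p ≤ 1) :
    (∑ i ∈ t, z i) ^ p ≤ ∑ i ∈ t, z i ^ p := by
  revert ht
  induction t using Finset.cons_induction with
  | empty => intro h; exact absurd h (by simp)
  | cons a t' ha ih =>
    intro _
    rcases t'.eq_empty_or_nonempty with rfl | ht'
    · simp
    · rw [Finset.sum_cons, Finset.sum_cons]
      exact (ENNReal.rpow_add_le_add_rpow _ _ h0 h1).trans (add_le_add le_rfl (ih ht'))

lemma ennreal_sum_rpow_le {ι : Type*} (t : Finset ι) (ht : t.Nonempty) (z : ι → ℝ≥0∞)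
    {s : ℝ} (hs : 0 ≤ s) :
    (∑ i ∈ t, z i) ^ s ≤ (t.card : ℝ≥0∞) ^ (max 0 (s - 1)) * ∑ i ∈ t, z i ^ s := by
  rcases le_total s 1 with h1 | h1
  · rw [max_eq_left (by linarith), ENNReal.rpow_zero, one_mul]
    exact rpow_sum_le_sum_rpow' t ht z hs h1
  · rw [max_eq_right (by linarith)]
    have hd0 : (t.card : ℝ≥0∞) ≠ 0 := by
      simpa using ht.card_pos.ne'
    have hdt : (t.card : ℝ≥0∞) ≠ ⊤ := ENNReal.natCast_ne_top _
    have hw : ∑ _i ∈ t, (t.card : ℝ≥0∞)⁻¹ = 1 := by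
      rw [Finset.sum_const, nsmul_eq_mul, ENNReal.mul_inv_cancel hd0 hdt]
    have h := ENNReal.rpow_arith_mean_le_arith_mean_rpow t (fun _ => (t.card : ℝ≥0∞)⁻¹) z hw h1
    have hz : ∑ i ∈ t, z i = (t.card : ℝ≥0∞) * ∑ i ∈ t, (t.card : ℝ≥0∞)⁻¹ * z i := by
      rw [Finset.mul_sum]
      refine Finset.sum_congr rfl fun i _ => ?_
      rw [← mul_assoc, ENNReal.mul_inv_cancel hd0 hdt, one_mul]
    calc (∑ i ∈ t, z i) ^ s
        = ((t.card : ℝ≥0∞) * ∑ i ∈ t, (t.card : ℝ≥0∞)⁻¹ * z i) ^ s := by rw [← hz]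
      _ = (t.card : ℝ≥0∞) ^ s * (∑ i ∈ t, (t.card : ℝ≥0∞)⁻¹ * z i) ^ s :=
          ENNReal.mul_rpow_of_nonneg _ _ hs
      _ ≤ (t.card : ℝ≥0∞) ^ s * ∑ i ∈ t, (t.card : ℝ≥0∞)⁻¹ * z i ^ s := mul_le_mul_right h _
      _ = (t.card : ℝ≥0∞) ^ s * ((t.card : ℝ≥0∞)⁻¹ * ∑ i ∈ t, z i ^ s) := by
          rw [← Finset.mul_sum]
      _ = (t.card : ℝ≥0∞) ^ (s - 1) * ∑ i ∈ t, z i ^ s := by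
          rw [← mul_assoc]
          congr 1
          rw [sub_eq_add_neg, ENNReal.rpow_add _ _ hd0 hdt, ENNReal.rpow_neg_one]

section core

variable (d : ℕ) (lam : Fin d → ℕ → ℝ) (s : ℝ) (c : Fin d → ℕ → ℝ) (j : Fin d)

/-- `S j`, the factorized sum with exponent `s` on slot `j` and `0` elsewhere. -/
lemma S_eq :
    (∑' ν : Fin d → ℕ,
        ∏ i, ENNReal.ofReal (lam i (ν i) ^ (if i = j then s else (0:ℝ)) * c i (ν i) ^ 2))
      = (∑' n, ENNReal.ofReal (lam j n ^ s * c j n ^ 2)) *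
        ∏ i ∈ Finset.univ.erase j, ∑' n, ENNReal.ofReal (lam i n ^ (0:ℝ) * c i n ^ 2) := by
  rw [tsum_pi_fin_prod d
    (fun i n => ENNReal.ofReal (lam i n ^ (if i = j then s else (0:ℝ)) * c i n ^ 2))]
  rw [← Finset.mul_prod_erase Finset.univ _ (Finset.mem_univ j)]
  congr 1
  · simp
  · exact Finset.prod_congr rfl fun i hi => by
      simp [Finset.ne_of_mem_erase hi]

lemma prod_ite_eq' (hpos : ∀ j n, 0 < lam j n) (ν : Fin d → ℕ) :
    (∏ i, ENNReal.ofReal (lam i (ν i) ^ (if i = j then s else (0:ℝ)) * c i (ν i) ^ 2))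
      = ENNReal.ofReal (lam j (ν j) ^ s * (∏ i, c i (ν i)) ^ 2) := by
  rw [← ENNReal.ofReal_prod_of_nonneg
    (fun i _ => mul_nonneg (Real.rpow_nonneg (hpos i (ν i)).le _) (sq_nonneg _))]
  congr 1
  rw [Finset.prod_mul_distrib, Finset.prod_pow]
  congr 1
  rw [← Finset.mul_prod_erase Finset.univ _ (Finset.mem_univ j), if_pos rfl,
    Finset.prod_eq_one (fun i hi => by
      rw [if_neg (Finset.ne_of_mem_erase hi), Real.rpow_zero]), mul_one]

end core

section bounds

variable {d : ℕ} {lam : Fin d → ℕ → ℝ} {s : ℝ} {c : Fin d → ℕ → ℝ} {τ : (Fin d → ℕ) → ℝ}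

lemma lower_sq (hd : 0 < d) (hpos : ∀ j n, 0 < lam j n) (hs : 0 ≤ s)
    (hτ : ∀ ν, τ ν = ∏ j, c j (ν j)) (j : Fin d) :
    (∑' n, ENNReal.ofReal (lam j n ^ s * c j n ^ 2)) *
        ∏ i ∈ Finset.univ.erase j, (∑' n, ENNReal.ofReal (lam i n ^ (0:ℝ) * c i n ^ 2))
      ≤ ∑' ν : Fin d → ℕ, ENNReal.ofReal (lamNu d lam ν ^ s * τ ν ^ 2) := by
  rw [← S_eq]
  refine ENNReal.tsum_le_tsum fun ν => ?_
  rw [prod_ite_eq' d lam s c j hpos ν, hτ ν]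
  apply ENNReal.ofReal_le_ofReal
  apply mul_le_mul_of_nonneg_right _ (sq_nonneg _)
  exact Real.rpow_le_rpow (hpos j (ν j)).le
    (Finset.single_le_sum (fun i _ => (hpos i (ν i)).le) (Finset.mem_univ j)) hs

lemma upper_sq (hd : 0 < d) (hpos : ∀ j n, 0 < lam j n) (hs : 0 ≤ s)
    (hτ : ∀ ν, τ ν = ∏ j, c j (ν j)) :
    (∑' ν : Fin d → ℕ, ENNReal.ofReal (lamNu d lam ν ^ s * τ ν ^ 2))
      ≤ (d : ℝ≥0∞) ^ (max 0 (s - 1)) *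
        ∑ j : Fin d, (∑' n, ENNReal.ofReal (lam j n ^ s * c j n ^ 2)) *
          ∏ i ∈ Finset.univ.erase j, (∑' n, ENNReal.ofReal (lam i n ^ (0:ℝ) * c i n ^ 2)) := by
  have : Nonempty (Fin d) := ⟨⟨0, hd⟩⟩
  have key : ∀ ν : Fin d → ℕ,
      ENNReal.ofReal (lamNu d lam ν ^ s * τ ν ^ 2)
        ≤ (d : ℝ≥0∞) ^ (max 0 (s - 1)) *
          ∑ j : Fin d,
            ∏ i, ENNReal.ofReal (lam i (ν i) ^ (if i = j then s else (0:ℝ)) * c i (ν i) ^ 2) := by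
    intro ν
    have hlamnu : 0 < lamNu d lam ν := Finset.sum_pos (fun i _ => hpos i (ν i)) Finset.univ_nonempty
    rw [ENNReal.ofReal_mul (Real.rpow_nonneg hlamnu.le _)]
    have h1 : ENNReal.ofReal (lamNu d lam ν ^ s)
        = (∑ i, ENNReal.ofReal (lam i (ν i))) ^ s := by
      rw [← ENNReal.ofReal_rpow_of_pos hlamnu]
      congr 1
      exact ENNReal.ofReal_sum_of_nonneg (fun i _ => (hpos i (ν i)).le)
    have h2 := ennreal_sum_rpow_le Finset.univ Finset.univ_nonempty
      (fun i => ENNReal.ofReal (lam i (ν i))) hs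
    rw [Finset.card_univ, Fintype.card_fin] at h2
    calc ENNReal.ofReal (lamNu d lam ν ^ s) * ENNReal.ofReal (τ ν ^ 2)
        ≤ ((d : ℝ≥0∞) ^ (max 0 (s - 1)) * ∑ i, ENNReal.ofReal (lam i (ν i)) ^ s) *
            ENNReal.ofReal (τ ν ^ 2) := by
          rw [h1]; exact mul_le_mul_left h2 _
      _ = (d : ℝ≥0∞) ^ (max 0 (s - 1)) *
            ∑ j, ENNReal.ofReal (lam j (ν j)) ^ s * ENNReal.ofReal (τ ν ^ 2) := by
          rw [mul_assoc, Finset.sum_mul]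
      _ = _ := by
          congr 1
          refine Finset.sum_congr rfl fun j _ => ?_
          rw [prod_ite_eq' d lam s c j hpos ν, hτ ν,
            ENNReal.ofReal_mul (Real.rpow_nonneg (hpos j (ν j)).le _),
            ENNReal.ofReal_rpow_of_pos (hpos j (ν j))]
  calc (∑' ν : Fin d → ℕ, ENNReal.ofReal (lamNu d lam ν ^ s * τ ν ^ 2))
      ≤ ∑' ν : Fin d → ℕ, (d : ℝ≥0∞) ^ (max 0 (s - 1)) *
          ∑ j : Fin d,
            ∏ i, ENNReal.ofReal (lam i (ν i) ^ (if i = j then s else (0:ℝ)) * c i (ν i) ^ 2) :=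
        ENNReal.tsum_le_tsum key
    _ = (d : ℝ≥0∞) ^ (max 0 (s - 1)) *
          ∑ j : Fin d, ∑' ν : Fin d → ℕ,
            ∏ i, ENNReal.ofReal (lam i (ν i) ^ (if i = j then s else (0:ℝ)) * c i (ν i) ^ 2) := by
        rw [ENNReal.tsum_mul_left]
        congr 1
        exact Summable.tsum_finsetSum (fun j _ => ENNReal.summable)
    _ = _ := by
        congr 1
        exact Finset.sum_congr rfl fun j _ => S_eq d lam s c j

end bounds

/-- Lemma 3.2 of the paper: for `s ≥ 0` and a rank-one tensor
`τ_ν = ∏_j c_j(ν_j)`,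
`‖c_j‖_{H_j^s} ∏_{i≠j} ‖c_i‖_{H_i^0} ≤ ‖τ‖_s ≤ (d^{max{0,s−1}})^{1/2} Σ_j ‖c_j‖_{H_j^s} ∏_{i≠j} ‖c_i‖_{H_i^0}`,
and `τ ∈ H^s` iff `τ` admits a representation with all factors in `H_j^s`. -/
theorem rank_one_tensor_norm_bounds
    (d : ℕ) (hd : 0 < d) (lam : Fin d → ℕ → ℝ)
    (hpos : ∀ j n, 0 < lam j n) (hmono : ∀ j, Monotone (lam j))
    (htend : ∀ j, Tendsto (lam j) atTop atTop)
    (s : ℝ) (hs : 0 ≤ s)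
    (c : Fin d → ℕ → ℝ) (τ : (Fin d → ℕ) → ℝ)
    (hτ : ∀ ν, τ ν = ∏ j, c j (ν j)) :
    (∀ j : Fin d,
      hjnorm d lam j s (c j) * ∏ i ∈ Finset.univ.erase j, hjnorm d lam i 0 (c i)
        ≤ hnorm d lam s τ) ∧
    (hnorm d lam s τ
      ≤ ENNReal.ofReal (((d : ℝ) ^ max 0 (s - 1)) ^ ((1 : ℝ) / 2)) *
          ∑ j : Fin d,
            hjnorm d lam j s (c j) * ∏ i ∈ Finset.univ.erase j, hjnorm d lam i 0 (c i)) ∧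
    (hnorm d lam s τ < ⊤ ↔
      ∃ c' : Fin d → ℕ → ℝ, (∀ ν, τ ν = ∏ j, c' j (ν j)) ∧
        ∀ j, hjnorm d lam j s (c' j) < ⊤) := by
  have : Nonempty (Fin d) := ⟨⟨0, hd⟩⟩
  have hhalf : (0:ℝ) ≤ 1/2 := by norm_num
  -- general lower bound, for any factors of any tensor
  have lower : ∀ (c : Fin d → ℕ → ℝ) (τ : (Fin d → ℕ) → ℝ),
      (∀ ν, τ ν = ∏ j, c j (ν j)) → ∀ j : Fin d,
      hjnorm d lam j s (c j) * ∏ i ∈ Finset.univ.erase j, hjnorm d lam i 0 (c i)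
        ≤ hnorm d lam s τ := by
    intro c τ hτ j
    simp only [hjnorm, hnorm]
    rw [ENNReal.prod_rpow_of_nonneg hhalf, ← ENNReal.mul_rpow_of_nonneg _ _ hhalf]
    exact ENNReal.rpow_le_rpow (lower_sq hd hpos hs hτ j) hhalf
  -- general upper bound
  have upper : ∀ (c : Fin d → ℕ → ℝ) (τ : (Fin d → ℕ) → ℝ),
      (∀ ν, τ ν = ∏ j, c j (ν j)) →
      hnorm d lam s τ
        ≤ ENNReal.ofReal (((d : ℝ) ^ max 0 (s - 1)) ^ ((1 : ℝ) / 2)) *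
          ∑ j : Fin d,
            hjnorm d lam j s (c j) * ∏ i ∈ Finset.univ.erase j, hjnorm d lam i 0 (c i) := by
    intro c τ hτ
    have hdR : (0:ℝ) < d := by exact_mod_cast hd
    have hC : ENNReal.ofReal (((d : ℝ) ^ max 0 (s - 1)) ^ ((1 : ℝ) / 2))
        = ((d : ℝ≥0∞) ^ (max 0 (s - 1))) ^ ((1:ℝ)/2) := by
      rw [← ENNReal.ofReal_rpow_of_pos (Real.rpow_pos_of_pos hdR _),
        ← ENNReal.ofReal_rpow_of_pos hdR, ENNReal.ofReal_natCast]
    simp only [hjnorm, hnorm]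
    rw [hC]
    calc (∑' ν : Fin d → ℕ, ENNReal.ofReal (lamNu d lam ν ^ s * τ ν ^ 2)) ^ ((1:ℝ)/2)
        ≤ ((d : ℝ≥0∞) ^ (max 0 (s - 1)) *
            ∑ j : Fin d, (∑' n, ENNReal.ofReal (lam j n ^ s * c j n ^ 2)) *
              ∏ i ∈ Finset.univ.erase j,
                (∑' n, ENNReal.ofReal (lam i n ^ (0:ℝ) * c i n ^ 2))) ^ ((1:ℝ)/2) :=
          ENNReal.rpow_le_rpow (upper_sq hd hpos hs hτ) hhalf
      _ = ((d : ℝ≥0∞) ^ (max 0 (s - 1))) ^ ((1:ℝ)/2) *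
            (∑ j : Fin d, (∑' n, ENNReal.ofReal (lam j n ^ s * c j n ^ 2)) *
              ∏ i ∈ Finset.univ.erase j,
                (∑' n, ENNReal.ofReal (lam i n ^ (0:ℝ) * c i n ^ 2))) ^ ((1:ℝ)/2) :=
          ENNReal.mul_rpow_of_nonneg _ _ hhalf
      _ ≤ _ := by
          refine mul_le_mul_right ?_ _
          refine (rpow_sum_le_sum_rpow' Finset.univ Finset.univ_nonempty _ hhalf
            (by norm_num)).trans ?_
          refine Finset.sum_le_sum fun j _ => ?_
          rw [ENNReal.mul_rpow_of_nonneg _ _ hhalf, ← ENNReal.prod_rpow_of_nonneg hhalf]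
  refine ⟨lower c τ hτ, upper c τ hτ, ?_, ?_⟩
  · -- forward direction of the iff
    intro hfin
    by_cases hall : ∀ j : Fin d, ∃ n, c j n ≠ 0
    · refine ⟨c, hτ, fun j => ?_⟩
      have hne : ∀ (i : Fin d) (σ : ℝ), hjnorm d lam i σ (c i) ≠ 0 := by
        intro i σ
        obtain ⟨n0, hn0⟩ := hall i
        have hterm : (0:ℝ≥0∞) < ENNReal.ofReal (lam i n0 ^ σ * c i n0 ^ 2) := by
          apply ENNReal.ofReal_pos.mpr
          have h2 : 0 < c i n0 ^ 2 := by positivity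
          exact mul_pos (Real.rpow_pos_of_pos (hpos i n0) σ) h2
        have hts : (∑' n, ENNReal.ofReal (lam i n ^ σ * c i n ^ 2)) ≠ 0 :=
          (hterm.trans_le (ENNReal.le_tsum n0)).ne'
        simp only [hjnorm, ne_eq, ENNReal.rpow_eq_zero_iff]
        push_neg
        exact ⟨fun h => absurd h hts, fun h => by norm_num⟩
      have hP : (∏ i ∈ Finset.univ.erase j, hjnorm d lam i 0 (c i)) ≠ 0 :=
        Finset.prod_ne_zero_iff.mpr fun i _ => hne i 0
      have hlt : hjnorm d lam j s (c j) * ∏ i ∈ Finset.univ.erase j, hjnorm d lam i 0 (c i)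
          < ⊤ := (lower c τ hτ j).trans_lt hfin
      rw [lt_top_iff_ne_top]
      intro htop
      rw [htop, ENNReal.top_mul hP] at hlt
      exact (lt_irrefl _ hlt)
    · push_neg at hall
      obtain ⟨j0, hj0⟩ := hall
      refine ⟨fun _ _ => 0, fun ν => ?_, fun j => ?_⟩
      · rw [hτ ν, Finset.prod_eq_zero (Finset.mem_univ j0) (hj0 (ν j0))]
        rw [Finset.prod_const, zero_pow]
        simpa using hd.ne'
      · simp only [hjnorm]
        have : ∀ n : ℕ, ENNReal.ofReal (lam j n ^ s * (0:ℝ) ^ 2) = 0 := by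
          intro n; simp
        rw [tsum_congr this, tsum_zero, ENNReal.zero_rpow_of_pos (by norm_num)]
        exact ENNReal.zero_lt_top
  · -- backward direction of the iff
    rintro ⟨c', hτ', hc'⟩
    have hL : ∀ i : Fin d, (∑' n, ENNReal.ofReal (lam i n ^ s * c' i n ^ 2)) < ⊤ := by
      intro i
      have := hc' i
      simp only [hjnorm] at this
      rwa [ENNReal.rpow_lt_top_iff_of_pos (by norm_num : (0:ℝ) < 1/2)] at this
    have hM : ∀ i : Fin d, hjnorm d lam i 0 (c' i) < ⊤ := by
      intro i
      have h0 : (0:ℝ) < lam i 0 ^ s := Real.rpow_pos_of_pos (hpos i 0) s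
      have key : ∀ n : ℕ, ENNReal.ofReal (lam i n ^ (0:ℝ) * c' i n ^ 2)
          ≤ ENNReal.ofReal ((lam i 0 ^ s)⁻¹) * ENNReal.ofReal (lam i n ^ s * c' i n ^ 2) := by
        intro n
        rw [← ENNReal.ofReal_mul (by positivity)]
        apply ENNReal.ofReal_le_ofReal
        rw [Real.rpow_zero, one_mul, ← mul_assoc]
        have h1 : 1 ≤ (lam i 0 ^ s)⁻¹ * lam i n ^ s := by
          rw [← div_eq_inv_mul]
          exact (one_le_div h0).mpr
            (Real.rpow_le_rpow (hpos i 0).le (hmono i (Nat.zero_le n)) hs)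
        nlinarith [sq_nonneg (c' i n)]
      have hsum : (∑' n, ENNReal.ofReal (lam i n ^ (0:ℝ) * c' i n ^ 2))
          ≤ ENNReal.ofReal ((lam i 0 ^ s)⁻¹) * ∑' n, ENNReal.ofReal (lam i n ^ s * c' i n ^ 2) := by
        rw [← ENNReal.tsum_mul_left]
        exact ENNReal.tsum_le_tsum key
      have : (∑' n, ENNReal.ofReal (lam i n ^ (0:ℝ) * c' i n ^ 2)) < ⊤ :=
        hsum.trans_lt (ENNReal.mul_lt_top ENNReal.ofReal_lt_top (hL i))
      simp only [hjnorm]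
      exact ENNReal.rpow_lt_top_of_nonneg hhalf this.ne
    refine (upper c' τ hτ').trans_lt ?_
    apply ENNReal.mul_lt_top ENNReal.ofReal_lt_top
    rw [ENNReal.sum_lt_top]
    intro j _
    apply ENNReal.mul_lt_top (hc' j)
    exact ENNReal.prod_lt_top fun i _ => hM i
end

section
/- Let s ≥ 0 and set λ₀ := min_{1≤j≤d} λ_{j,1} > 0 and C := (d/λ₀^{d−1})^{s/2}. Then every rank-one tensor τ with factors c_1,…,c_d satisfies, as an inequality in [0,∞], ∏_{j=1}^d ‖c_j‖_{H_j^{−s}} ≤ C · ‖τ‖_{−s}. -/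
open scoped ENNReal
open Filter

lemma tsum_pi_fin : ∀ (d : ℕ) (f : Fin d → ℕ → ℝ≥0∞),
    ∑' ν : Fin d → ℕ, ∏ j, f j (ν j) = ∏ j, ∑' n, f j n := by
  intro d
  induction d with
  | zero =>
    intro f
    rw [tsum_eq_single (fun i => i.elim0) (fun b hb => absurd (Subsingleton.elim b _) hb)]
    simp
  | succ d ih =>
    intro f
    have h1 := ((Fin.consEquiv (fun _ : Fin (d+1) => ℕ)).tsum_eq (fun ν => ∏ j, f j (ν j)))
    rw [← h1]
    have h2 : ∀ p : ℕ × (Fin d → ℕ),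
        (∏ j, f j (((Fin.consEquiv (fun _ : Fin (d+1) => ℕ)) p) j))
          = f 0 p.1 * ∏ j : Fin d, f j.succ (p.2 j) := by
      intro p
      rw [Fin.prod_univ_succ]
      simp [Fin.consEquiv]
    simp_rw [h2]
    rw [ENNReal.tsum_prod', Fin.prod_univ_succ]
    simp_rw [ENNReal.tsum_mul_left]
    rw [ENNReal.tsum_mul_right, ih (fun j => f j.succ)]

/-- Corollary 3.3 of the paper, with an explicit constant:
with `λ₀ = min_j λ_{j,1}` and `C = (d/λ₀^{d−1})^{s/2}`, every rank-one tensor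
`τ_ν = ∏_j c_j(ν_j)` satisfies `∏_j ‖c_j‖_{H_j^{−s}} ≤ C ‖τ‖_{−s}`. -/
theorem rank_one_dual_cross_norm_bound
    (d : ℕ) (hd : 0 < d) (lam : Fin d → ℕ → ℝ)
    (hpos : ∀ j n, 0 < lam j n) (hmono : ∀ j, Monotone (lam j))
    (htend : ∀ j, Tendsto (lam j) atTop atTop)
    (s : ℝ) (hs : 0 ≤ s)
    (lam0 : ℝ) (hlam0 : IsLeast {x : ℝ | ∃ j : Fin d, x = lam j 0} lam0)
    (c : Fin d → ℕ → ℝ) (τ : (Fin d → ℕ) → ℝ)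
    (hτ : ∀ ν, τ ν = ∏ j, c j (ν j)) :
    ∏ j : Fin d, hjnorm d lam j (-s) (c j)
      ≤ ENNReal.ofReal (((d : ℝ) / lam0 ^ ((d : ℝ) - 1)) ^ (s / 2)) *
          hnorm d lam (-s) τ := by
  classical
  obtain ⟨j0, hj0⟩ := hlam0.1
  have hlam0pos : 0 < lam0 := hj0 ▸ hpos j0 0
  have hd1 : (1:ℕ) ≤ d := hd
  set M : ℝ := (d : ℝ) / lam0 ^ ((d : ℝ) - 1) with hM
  have hLpow : lam0 ^ ((d : ℝ) - 1) = lam0 ^ (d - 1) := by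
    rw [← Real.rpow_natCast lam0 (d - 1), Nat.cast_sub hd1, Nat.cast_one]
  have hMpos : 0 < M := by
    apply div_pos (by exact_mod_cast hd) (Real.rpow_pos_of_pos hlam0pos _)
  have key : ∀ ν : Fin d → ℕ,
      ∏ j, (lam j (ν j) ^ (-s) * c j (ν j) ^ 2)
        ≤ M ^ s * (lamNu d lam ν ^ (-s) * τ ν ^ 2) := by
    intro ν
    set P : ℝ := ∏ j, lam j (ν j) with hP
    have hPpos : 0 < P := Finset.prod_pos (fun j _ => hpos j (ν j))
    have hLν : 0 < lamNu d lam ν :=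
      Finset.sum_pos (fun j _ => hpos j (ν j)) ⟨j0, Finset.mem_univ j0⟩
    have hsum : lamNu d lam ν ≤ M * P := by
      have hjle : ∀ j : Fin d, lam j (ν j) * lam0 ^ (d - 1) ≤ P := by
        intro j
        have hcard : (Finset.univ.erase j).card = d - 1 := by
          rw [Finset.card_erase_of_mem (Finset.mem_univ j), Finset.card_univ, Fintype.card_fin]
        have h1 : lam0 ^ (d - 1) ≤ ∏ i ∈ Finset.univ.erase j, lam i (ν i) := by
          calc lam0 ^ (d-1) = ∏ _i ∈ Finset.univ.erase j, lam0 := by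
                rw [Finset.prod_const, hcard]
            _ ≤ _ := Finset.prod_le_prod (fun _ _ => hlam0pos.le)
                (fun i _ => le_trans (hlam0.2 ⟨i, rfl⟩) (hmono i (Nat.zero_le _)))
        calc lam j (ν j) * lam0 ^ (d-1)
            ≤ lam j (ν j) * ∏ i ∈ Finset.univ.erase j, lam i (ν i) :=
              mul_le_mul_of_nonneg_left h1 (hpos j (ν j)).le
          _ = P := Finset.mul_prod_erase Finset.univ (fun i => lam i (ν i)) (Finset.mem_univ j)
      have hstep : lamNu d lam ν ≤ ∑ _j : Fin d, P / lam0 ^ (d-1) := by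
        apply Finset.sum_le_sum
        intro j _
        rw [le_div_iff₀ (by positivity)]
        exact hjle j
      calc lamNu d lam ν ≤ ∑ _j : Fin d, P / lam0 ^ (d-1) := hstep
        _ = d * (P / lam0 ^ (d-1)) := by
            rw [Finset.sum_const, Finset.card_univ, Fintype.card_fin, nsmul_eq_mul]
        _ = M * P := by rw [hM, hLpow]; ring
    have hpow : lamNu d lam ν ^ s ≤ M ^ s * P ^ s := by
      calc lamNu d lam ν ^ s ≤ (M * P) ^ s := Real.rpow_le_rpow hLν.le hsum hs
        _ = M ^ s * P ^ s := Real.mul_rpow hMpos.le hPpos.le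
    have hinv : P ^ (-s) ≤ M ^ s * lamNu d lam ν ^ (-s) := by
      rw [Real.rpow_neg hPpos.le, Real.rpow_neg hLν.le, ← div_eq_mul_inv,
        le_div_iff₀ (Real.rpow_pos_of_pos hLν s),
        inv_mul_le_iff₀ (Real.rpow_pos_of_pos hPpos s)]
      exact hpow.trans_eq (mul_comm _ _)
    have hcprod : ∏ j, (lam j (ν j) ^ (-s) * c j (ν j) ^ 2) = P ^ (-s) * τ ν ^ 2 := by
      rw [Finset.prod_mul_distrib,
        Real.finset_prod_rpow _ _ (fun j _ => (hpos j (ν j)).le) (-s),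
        hτ ν, Finset.prod_pow]
    rw [hcprod]
    calc P ^ (-s) * τ ν ^ 2
        ≤ (M ^ s * lamNu d lam ν ^ (-s)) * τ ν ^ 2 :=
          mul_le_mul_of_nonneg_right hinv (sq_nonneg _)
      _ = M ^ s * (lamNu d lam ν ^ (-s) * τ ν ^ 2) := by ring
  -- assemble the ENNReal inequality
  simp only [hjnorm, hnorm]
  rw [ENNReal.prod_rpow_of_nonneg (by norm_num : (0:ℝ) ≤ 1/2),
    ← tsum_pi_fin d (fun j n => ENNReal.ofReal (lam j n ^ (-s) * c j n ^ 2))]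
  have hRHS : ENNReal.ofReal (M ^ (s/2)) *
        (∑' ν : Fin d → ℕ, ENNReal.ofReal (lamNu d lam ν ^ (-s) * τ ν ^ 2)) ^ (1/2:ℝ)
      = (ENNReal.ofReal (M ^ s) *
        ∑' ν : Fin d → ℕ, ENNReal.ofReal (lamNu d lam ν ^ (-s) * τ ν ^ 2)) ^ (1/2:ℝ) := by
    rw [ENNReal.mul_rpow_of_nonneg _ _ (by norm_num : (0:ℝ) ≤ 1/2)]
    congr 1
    rw [ENNReal.ofReal_rpow_of_nonneg (Real.rpow_nonneg hMpos.le s) (by norm_num)]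
    congr 1
    rw [← Real.rpow_mul hMpos.le]
    congr 1
    ring
  rw [hRHS]
  apply ENNReal.rpow_le_rpow _ (by norm_num : (0:ℝ) ≤ 1/2)
  rw [← ENNReal.tsum_mul_left]
  apply ENNReal.tsum_le_tsum
  intro ν
  calc ∏ j, ENNReal.ofReal (lam j (ν j) ^ (-s) * c j (ν j) ^ 2)
      = ENNReal.ofReal (∏ j, (lam j (ν j) ^ (-s) * c j (ν j) ^ 2)) := by
        rw [ENNReal.ofReal_prod_of_nonneg]
        intro j _
        exact mul_nonneg (Real.rpow_nonneg (hpos j (ν j)).le _) (sq_nonneg _)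
    _ ≤ ENNReal.ofReal (M ^ s * (lamNu d lam ν ^ (-s) * τ ν ^ 2)) :=
        ENNReal.ofReal_le_ofReal (key ν)
    _ = ENNReal.ofReal (M ^ s) * ENNReal.ofReal (lamNu d lam ν ^ (-s) * τ ν ^ 2) :=
        ENNReal.ofReal_mul (Real.rpow_nonneg hMpos.le s)
end

section
/- Let C > 0 and let s, s' ∈ ℝ with s' > s. Then the set T(s',C) := { τ ∈ H^{s'} : τ is a rank-one tensor and ‖τ‖_{s'} ≤ C } is a compact subset of the Hilbert space H^s. -/
open scoped ENNReal
open Filter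
open scoped Topology

set_option maxHeartbeats 1000000
set_option synthInstance.maxHeartbeats 400000

lemma lamNu_pos {d : ℕ} (hd : 0 < d) {lam : Fin d → ℕ → ℝ} (hpos : ∀ j n, 0 < lam j n)
    (ν : Fin d → ℕ) : 0 < lamNu d lam ν :=
  Finset.sum_pos (fun j _ => hpos j (ν j)) ⟨⟨0, hd⟩, Finset.mem_univ _⟩

lemma hnorm_le_ofReal_iff {d : ℕ} (hd : 0 < d) {lam : Fin d → ℕ → ℝ}
    (hpos : ∀ j n, 0 < lam j n) (t : ℝ) (v : (Fin d → ℕ) → ℝ) {C : ℝ} (hC : 0 ≤ C) :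
    hnorm d lam t v ≤ ENNReal.ofReal C ↔
      ∀ A : Finset (Fin d → ℕ), ∑ ν ∈ A, lamNu d lam ν ^ t * v ν ^ 2 ≤ C ^ 2 := by
  have hterm : ∀ ν, 0 ≤ lamNu d lam ν ^ t * v ν ^ 2 := fun ν =>
    mul_nonneg (Real.rpow_nonneg (lamNu_pos hd hpos ν).le t) (sq_nonneg _)
  have hiff : hnorm d lam t v ≤ ENNReal.ofReal C ↔
      (∑' ν : Fin d → ℕ, ENNReal.ofReal (lamNu d lam ν ^ t * v ν ^ 2)) ≤
        ENNReal.ofReal (C ^ 2) := by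
    rw [hnorm, ← ENNReal.rpow_le_rpow_iff (z := (2:ℝ)) two_pos, ← ENNReal.rpow_mul]
    norm_num
    rw [← ENNReal.ofReal_pow hC]
  rw [hiff]
  constructor
  · intro h A
    have h1 : (ENNReal.ofReal (∑ ν ∈ A, lamNu d lam ν ^ t * v ν ^ 2)) ≤
        ENNReal.ofReal (C ^ 2) := by
      rw [ENNReal.ofReal_sum_of_nonneg (fun ν _ => hterm ν)]
      exact le_trans (ENNReal.sum_le_tsum A) h
    exact (ENNReal.ofReal_le_ofReal_iff (sq_nonneg C)).mp h1
  · intro h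
    rw [ENNReal.tsum_eq_iSup_sum]
    refine iSup_le fun A => ?_
    rw [← ENNReal.ofReal_sum_of_nonneg (fun ν _ => hterm ν)]
    exact ENNReal.ofReal_le_ofReal (h A)

lemma finite_lamNu_lt (d : ℕ) {lam : Fin d → ℕ → ℝ} (hpos : ∀ j n, 0 < lam j n)
    (htend : ∀ j, Tendsto (lam j) atTop atTop) (R : ℝ) :
    {ν : Fin d → ℕ | lamNu d lam ν < R}.Finite := by
  have h1 : ∀ j, {n : ℕ | lam j n < R}.Finite := by
    intro j
    obtain ⟨N, hN⟩ := (tendsto_atTop.mp (htend j) R).exists_forall_of_atTop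
    exact (Set.finite_Iio N).subset fun n hn => by
      by_contra h
      exact absurd (hN n (not_lt.mp h)) (not_le.mpr hn)
  refine (Set.Finite.pi h1).subset fun ν hν => ?_
  intro j _
  have hle : lam j (ν j) ≤ lamNu d lam ν :=
    Finset.single_le_sum (f := fun i => lam i (ν i)) (fun i _ => (hpos i (ν i)).le)
      (Finset.mem_univ j)
  exact lt_of_le_of_lt hle hν

lemma rankOne_identity {d : ℕ} {τ : (Fin d → ℕ) → ℝ} (h : IsRankOne d τ)
    (p q : Fin d → ℕ) :
    τ q * τ p ^ (d - 1) = ∏ j, τ (Function.update p j (q j)) := by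
  classical
  obtain ⟨c, hc⟩ := h
  simp only [hc]
  rw [Finset.prod_comm]
  have hinner : ∀ i : Fin d, (∏ j, c i (Function.update p j (q j) i)) =
      c i (q i) * c i (p i) ^ (d - 1) := by
    intro i
    have hterm : ∀ j : Fin d, c i (Function.update p j (q j) i) =
        if i = j then c i (q i) else c i (p i) := by
      intro j
      rcases eq_or_ne i j with rfl | hij
      · simp [Function.update_self]
      · simp [Function.update_of_ne hij, hij]
    rw [Finset.prod_congr rfl (fun j _ => hterm j)]
    rw [← Finset.prod_erase_mul Finset.univ _ (Finset.mem_univ i), if_pos rfl]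
    rw [Finset.prod_congr rfl (fun j hj => if_neg (Finset.ne_of_mem_erase hj).symm),
      Finset.prod_const, mul_comm]
    congr 1
    rw [Finset.card_erase_of_mem (Finset.mem_univ i), Finset.card_univ, Fintype.card_fin]
  rw [Finset.prod_congr rfl (fun i _ => hinner i), Finset.prod_mul_distrib,
    Finset.prod_pow]

lemma isRankOne_of_identity {d : ℕ} (hd : 0 < d) {τ : (Fin d → ℕ) → ℝ}
    (h : ∀ p q, τ q * τ p ^ (d - 1) = ∏ j, τ (Function.update p j (q j))) :
    IsRankOne d τ := by
  classical
  by_cases h0 : ∀ ν, τ ν = 0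
  · exact ⟨fun _ _ => 0, fun ν => by
      rw [h0 ν, Finset.prod_const, Finset.card_univ, Fintype.card_fin, zero_pow hd.ne']⟩
  · push_neg at h0
    obtain ⟨p, hp⟩ := h0
    set j₀ : Fin d := ⟨0, hd⟩
    refine ⟨fun j n => if j = j₀ then τ (Function.update p j n) / τ p ^ (d - 1)
      else τ (Function.update p j n), fun ν => ?_⟩
    have hpow : τ p ^ (d - 1) ≠ 0 := pow_ne_zero _ hp
    have key : (∏ j, if j = j₀ then τ (Function.update p j (ν j)) / τ p ^ (d - 1)
        else τ (Function.update p j (ν j))) =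
        (∏ j, τ (Function.update p j (ν j))) / τ p ^ (d - 1) := by
      have hfac : ∀ j : Fin d, (if j = j₀ then τ (Function.update p j (ν j)) / τ p ^ (d - 1)
          else τ (Function.update p j (ν j))) =
          τ (Function.update p j (ν j)) * (if j = j₀ then (τ p ^ (d - 1))⁻¹ else 1) := by
        intro j
        rcases eq_or_ne j j₀ with rfl | hj
        · simp [div_eq_mul_inv]
        · simp [hj]
      rw [Finset.prod_congr rfl (fun j _ => hfac j), Finset.prod_mul_distrib,
        Finset.prod_ite_eq' Finset.univ j₀ (fun _ => (τ p ^ (d - 1))⁻¹),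
        if_pos (Finset.mem_univ j₀), div_eq_mul_inv]
    rw [key, ← h p ν, mul_div_assoc, div_self hpow, mul_one]


/-- Lemma 3.4 of the paper: the set `T(s',C)` of rank-one tensors `τ` with
`‖τ‖_{s'} ≤ C` is a compact subset of `H^s` whenever `s' > s`.  Here `H^s` is realized
(isometrically) inside `ℓ²(ℕ^d)` via the weighting `x_ν = λ_ν^{s/2} τ_ν`. -/
theorem rank_one_bounded_set_is_compact
    (d : ℕ) (hd : 0 < d) (lam : Fin d → ℕ → ℝ)
    (hpos : ∀ j n, 0 < lam j n) (hmono : ∀ j, Monotone (lam j))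
    (htend : ∀ j, Tendsto (lam j) atTop atTop)
    (C : ℝ) (hC : 0 < C) (s s' : ℝ) (hss : s < s') :
    IsCompact {x : lp (fun _ : Fin d → ℕ => ℝ) 2 |
      ∃ τ : (Fin d → ℕ) → ℝ, IsRankOne d τ ∧
        hnorm d lam s' τ ≤ ENNReal.ofReal C ∧
        ∀ ν, (x : ∀ _ : Fin d → ℕ, ℝ) ν = lamNu d lam ν ^ (s / 2) * τ ν} := by
  classical
  have hlam : ∀ ν : Fin d → ℕ, 0 < lamNu d lam ν := lamNu_pos hd hpos
  have hδ : 0 < s' - s := sub_pos.mpr hss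
  have htwo : (0:ℝ) < (2:ℝ≥0∞).toReal := by norm_num
  have htwoR : (2:ℝ≥0∞).toReal = (2:ℝ) := by norm_num
  set w₀ : ℝ := lamNu d lam (fun _ => 0) ^ (s' - s) with hw₀def
  have hw₀ : 0 < w₀ := Real.rpow_pos_of_pos (hlam _) _
  have hwlb : ∀ ν : Fin d → ℕ, w₀ ≤ lamNu d lam ν ^ (s' - s) := by
    intro ν
    exact Real.rpow_le_rpow (hlam _).le
      (Finset.sum_le_sum fun j _ => hmono j (Nat.zero_le _)) hδ.le
  set E : Set (lp (fun _ : Fin d → ℕ => ℝ) 2) :=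
    {x | ∀ A : Finset (Fin d → ℕ),
      ∑ ν ∈ A, lamNu d lam ν ^ (s' - s) * x ν ^ 2 ≤ C ^ 2} with hEdef
  -- S ⊆ E
  have hSE : {x : lp (fun _ : Fin d → ℕ => ℝ) 2 |
      ∃ τ : (Fin d → ℕ) → ℝ, IsRankOne d τ ∧
        hnorm d lam s' τ ≤ ENNReal.ofReal C ∧
        ∀ ν, (x : ∀ _ : Fin d → ℕ, ℝ) ν = lamNu d lam ν ^ (s / 2) * τ ν} ⊆ E := by
    rintro x ⟨τ, -, hb, hco⟩ A
    have hexp : ∀ ν : Fin d → ℕ,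
        lamNu d lam ν ^ (s' - s) * x ν ^ 2 = lamNu d lam ν ^ s' * τ ν ^ 2 := by
      intro ν
      rw [hco ν, mul_pow, ← Real.rpow_natCast (lamNu d lam ν ^ (s/2)) 2,
        ← Real.rpow_mul (hlam ν).le, ← mul_assoc, ← Real.rpow_add (hlam ν)]
      norm_num
    rw [Finset.sum_congr rfl fun ν _ => hexp ν]
    exact (hnorm_le_ofReal_iff hd hpos s' τ hC.le).mp hb A
  -- norms and coordinates are bounded on E
  set B : ℝ := Real.sqrt (C ^ 2 / w₀) with hBdef
  have hB0 : 0 ≤ B := Real.sqrt_nonneg _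
  have hEsum : ∀ x ∈ E, ∀ A : Finset (Fin d → ℕ), ∑ ν ∈ A, x ν ^ 2 ≤ C ^ 2 / w₀ := by
    intro x hx A
    rw [le_div_iff₀ hw₀]
    calc (∑ ν ∈ A, x ν ^ 2) * w₀ = ∑ ν ∈ A, x ν ^ 2 * w₀ := Finset.sum_mul _ _ _
      _ ≤ ∑ ν ∈ A, lamNu d lam ν ^ (s' - s) * x ν ^ 2 := by
          refine Finset.sum_le_sum fun ν _ => ?_
          rw [mul_comm]
          exact mul_le_mul_of_nonneg_right (hwlb ν) (sq_nonneg _)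
      _ ≤ C ^ 2 := hx A
  have hnormE : ∀ x ∈ E, ‖x‖ ≤ B := by
    intro x hx
    refine lp.norm_le_of_forall_sum_le htwo hB0 fun A => ?_
    have h1 : ∑ ν ∈ A, ‖x ν‖ ^ (2:ℝ≥0∞).toReal = ∑ ν ∈ A, x ν ^ 2 :=
      Finset.sum_congr rfl fun ν _ => by
        rw [htwoR, Real.rpow_two, Real.norm_eq_abs, sq_abs]
    have h2 : B ^ (2:ℝ≥0∞).toReal = C ^ 2 / w₀ := by
      rw [htwoR, Real.rpow_two, hBdef, Real.sq_sqrt (div_nonneg (sq_nonneg C) hw₀.le)]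
    rw [h1, h2]
    exact hEsum x hx A
  have hcoordE : ∀ x ∈ E, ∀ ν, x ν ∈ Set.Icc (-B) B := by
    intro x hx ν
    have h1 : ‖x ν‖ ≤ ‖x‖ := lp.norm_apply_le_norm (by norm_num) x ν
    have := h1.trans (hnormE x hx)
    rw [Real.norm_eq_abs] at this
    exact ⟨neg_le_of_abs_le this, le_of_abs_le this⟩
  -- total boundedness of E
  have htb : TotallyBounded E := by
    rw [Metric.totallyBounded_iff]
    intro ε hε
    have hε3 : 0 < ε / 3 := by linarith
    set M : ℝ := C ^ 2 / (ε / 3) ^ 2 with hMdef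
    have hM : 0 < M := div_pos (pow_pos hC 2) (pow_pos hε3 2)
    set R : ℝ := max 1 (M ^ (s' - s)⁻¹) with hRdef
    have hR0 : (0:ℝ) ≤ R := le_trans zero_le_one (le_max_left _ _)
    have hMR : M ≤ R ^ (s' - s) := by
      calc M = (M ^ (s' - s)⁻¹) ^ (s' - s) := by
            rw [← Real.rpow_mul hM.le, inv_mul_cancel₀ hδ.ne', Real.rpow_one]
        _ ≤ R ^ (s' - s) :=
            Real.rpow_le_rpow (Real.rpow_nonneg hM.le _) (le_max_right _ _) hδ.le
    set F : Finset (Fin d → ℕ) := (finite_lamNu_lt d hpos htend R).toFinset with hFdef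
    have hFout : ∀ ν ∉ F, M ≤ lamNu d lam ν ^ (s' - s) := by
      intro ν hν
      have hRν : R ≤ lamNu d lam ν := by
        by_contra hlt
        exact hν ((Set.Finite.mem_toFinset _).mpr (not_le.mp hlt))
      exact hMR.trans (Real.rpow_le_rpow hR0 hRν hδ.le)
    -- the finite-rank projection
    set Φ : ((Fin d → ℕ) → ℝ) → lp (fun _ : Fin d → ℕ => ℝ) 2 :=
      fun y => ∑ ν ∈ F, y ν • lp.single 2 ν (1:ℝ) with hΦdef
    have hΦapply : ∀ (y : (Fin d → ℕ) → ℝ) (μ : Fin d → ℕ),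
        (Φ y : ∀ _ : Fin d → ℕ, ℝ) μ = if μ ∈ F then y μ else 0 := by
      intro y μ
      have hterm : ∀ ν : Fin d → ℕ,
          (y ν • lp.single 2 ν (1:ℝ) : lp (fun _ : Fin d → ℕ => ℝ) 2) μ
            = if μ = ν then y ν else 0 := by
        intro ν
        rw [lp.coeFn_smul, Pi.smul_apply, smul_eq_mul]
        rcases eq_or_ne μ ν with rfl | hμν
        · rw [lp.single_apply_self, mul_one, if_pos rfl]
        · rw [lp.single_apply_ne _ _ _ hμν, mul_zero, if_neg hμν]
      rw [hΦdef]
      rw [lp.coeFn_sum, Finset.sum_apply, Finset.sum_congr rfl (fun ν _ => hterm ν),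
        Finset.sum_ite_eq F μ y]
    have hΦcont : Continuous Φ :=
      continuous_finset_sum _ fun ν _ => (continuous_apply ν).smul continuous_const
    have hK : IsCompact (Φ '' Set.pi Set.univ fun _ : Fin d → ℕ => Set.Icc (-B) B) :=
      (isCompact_univ_pi fun _ => isCompact_Icc).image hΦcont
    obtain ⟨t, htfin, htcover⟩ := Metric.totallyBounded_iff.mp hK.totallyBounded (ε/3) hε3
    refine ⟨t, htfin, fun x hx => ?_⟩
    have hxK : Φ (⇑x) ∈ Φ '' Set.pi Set.univ fun _ : Fin d → ℕ => Set.Icc (-B) B :=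
      Set.mem_image_of_mem Φ (Set.mem_univ_pi.mpr fun ν => hcoordE x hx ν)
    obtain ⟨y, hyt, hy⟩ := Set.mem_iUnion₂.mp (htcover hxK)
    refine Set.mem_iUnion₂.mpr ⟨y, hyt, ?_⟩
    rw [Metric.mem_ball] at hy ⊢
    have hdistx : dist x (Φ ⇑x) ≤ ε / 3 := by
      rw [dist_eq_norm]
      refine lp.norm_le_of_forall_sum_le htwo hε3.le fun A => ?_
      have hterm2 : ∀ ν : Fin d → ℕ,
          ‖(x - Φ ⇑x : lp (fun _ : Fin d → ℕ => ℝ) 2) ν‖ ^ (2:ℝ≥0∞).toReal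
            = if ν ∈ F then 0 else x ν ^ 2 := by
        intro ν
        simp only [lp.coeFn_sub, Pi.sub_apply]
        rw [hΦapply, htwoR, Real.rpow_two]
        rcases em (ν ∈ F) with hν | hν
        · rw [if_pos hν, if_pos hν, sub_self, norm_zero]
          ring
        · rw [if_neg hν, if_neg hν, sub_zero, Real.norm_eq_abs, sq_abs]
      rw [Finset.sum_congr rfl fun ν _ => hterm2 ν]
      have h3 : ∀ ν ∈ A, (if ν ∈ F then 0 else x ν ^ 2) * M
          ≤ lamNu d lam ν ^ (s' - s) * x ν ^ 2 := by
        intro ν _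
        rcases em (ν ∈ F) with hν | hν
        · rw [if_pos hν, zero_mul]
          exact mul_nonneg (Real.rpow_nonneg (hlam ν).le _) (sq_nonneg _)
        · rw [if_neg hν, mul_comm]
          exact mul_le_mul_of_nonneg_right (hFout ν hν) (sq_nonneg _)
      have h4 : (∑ ν ∈ A, if ν ∈ F then 0 else x ν ^ 2) * M ≤ C ^ 2 := by
        rw [Finset.sum_mul]
        exact (Finset.sum_le_sum h3).trans (hx A)
      have h5 : (∑ ν ∈ A, if ν ∈ F then 0 else x ν ^ 2) ≤ C ^ 2 / M :=
        (le_div_iff₀ hM).mpr h4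
      have h6 : C ^ 2 / M = (ε / 3) ^ 2 := by
        rw [hMdef, div_div_cancel₀ (pow_ne_zero 2 hC.ne')]
      have h7 : (ε / 3) ^ 2 = (ε / 3) ^ (2:ℝ≥0∞).toReal := by
        rw [htwoR, Real.rpow_two]
      rw [← h7]
      exact h5.trans (le_of_eq h6)
    calc dist x y ≤ dist x (Φ ⇑x) + dist (Φ ⇑x) y := dist_triangle _ _ _
      _ < ε / 3 + ε / 3 := add_lt_add_of_le_of_lt hdistx hy
      _ ≤ ε := by linarith
  -- closedness of S
  have hcl : IsClosed {x : lp (fun _ : Fin d → ℕ => ℝ) 2 |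
      ∃ τ : (Fin d → ℕ) → ℝ, IsRankOne d τ ∧
        hnorm d lam s' τ ≤ ENNReal.ofReal C ∧
        ∀ ν, (x : ∀ _ : Fin d → ℕ, ℝ) ν = lamNu d lam ν ^ (s / 2) * τ ν} := by
    refine IsSeqClosed.isClosed ?_
    intro u x hu hux
    simp only [Set.mem_setOf_eq] at hu ⊢
    have hcoord : ∀ ν, Tendsto (fun n => (u n : ∀ _ : Fin d → ℕ, ℝ) ν) atTop
        (𝓝 ((x : ∀ _ : Fin d → ℕ, ℝ) ν)) := by
      intro ν
      rw [tendsto_iff_dist_tendsto_zero]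
      refine squeeze_zero (fun n => dist_nonneg) (fun n => ?_)
        (tendsto_iff_dist_tendsto_zero.mp hux)
      have h1 := lp.norm_apply_le_norm (by norm_num : (2:ℝ≥0∞) ≠ 0) (u n - x) ν
      rw [dist_eq_norm, dist_eq_norm]
      simpa [lp.coeFn_sub, Pi.sub_apply] using h1
    choose τ hrank hbound hcoeq using hu
    have hrpowne : ∀ ν, lamNu d lam ν ^ (s/2) ≠ 0 :=
      fun ν => (Real.rpow_pos_of_pos (hlam ν) _).ne'
    set τl : (Fin d → ℕ) → ℝ :=
      fun ν => (x : ∀ _ : Fin d → ℕ, ℝ) ν / lamNu d lam ν ^ (s/2) with hτl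
    have hτtend : ∀ ν, Tendsto (fun n => τ n ν) atTop (𝓝 (τl ν)) := by
      intro ν
      have heq : (fun n => τ n ν)
          = fun n => (u n : ∀ _ : Fin d → ℕ, ℝ) ν / lamNu d lam ν ^ (s/2) := by
        funext n
        rw [hcoeq n ν, mul_div_cancel_left₀ _ (hrpowne ν)]
      rw [heq, hτl]
      exact (hcoord ν).div_const _
    refine ⟨τl, ?_, ?_, fun ν => ?_⟩
    · refine isRankOne_of_identity hd fun p q => ?_
      have hL : Tendsto (fun n => τ n q * τ n p ^ (d-1)) atTop
          (𝓝 (τl q * τl p ^ (d-1))) := (hτtend q).mul ((hτtend p).pow _)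
      have hR : Tendsto (fun n => ∏ j, τ n (Function.update p j (q j))) atTop
          (𝓝 (∏ j, τl (Function.update p j (q j)))) :=
        tendsto_finset_prod _ fun j _ => hτtend _
      have heq2 : (fun n => τ n q * τ n p ^ (d-1))
          = fun n => ∏ j, τ n (Function.update p j (q j)) :=
        funext fun n => rankOne_identity (hrank n) p q
      rw [heq2] at hL
      exact tendsto_nhds_unique hL hR
    · rw [hnorm_le_ofReal_iff hd hpos s' τl hC.le]
      intro A
      have hA : ∀ n, ∑ ν ∈ A, lamNu d lam ν ^ s' * τ n ν ^ 2 ≤ C ^ 2 := fun n =>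
        (hnorm_le_ofReal_iff hd hpos s' (τ n) hC.le).mp (hbound n) A
      have hT : Tendsto (fun n => ∑ ν ∈ A, lamNu d lam ν ^ s' * τ n ν ^ 2) atTop
          (𝓝 (∑ ν ∈ A, lamNu d lam ν ^ s' * τl ν ^ 2)) :=
        tendsto_finset_sum _ fun ν _ => tendsto_const_nhds.mul ((hτtend ν).pow 2)
      exact le_of_tendsto hT (Eventually.of_forall hA)
    · simp only [hτl]
      rw [← mul_div_assoc]
      exact (mul_div_cancel_left₀ _ (hrpowne ν)).symm
  exact TotallyBounded.isCompact_of_isClosed (htb.subset hSE) hcl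
end

section
/- Let α > 0, ζ ∈ (0,2] and C₀ ≥ 8, and let γ(r) := e^{αr} for r ≥ 0. With C₁(ζ) := 4/(πζ)², R(r) := ⌈C₁(ζ)·(log(C₀·e^{αr}))²⌉ for r ≥ 1, and γ̂ defined by γ̂(m) := γ(r) = e^{αr} for r·R(r) ≤ m < (r+1)·R(r+1) (r ≥ 1) and γ̂(m) := 1 for 0 ≤ m < R(1), there exists a constant C > 0, depending only on α, ζ and C₀, such that γ̂(m) ≥ e^{(αm/C)^{1/3}} for all m ≥ R(1). -/
/-!
STATEMENT 17: for the exponential growth sequence `γ(r) = e^{αr}`, the tempered sequence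
`γ̂` (which equals `γ(r) = e^{αr}` on the window `r·R(r) ≤ m < (r+1)·R(r+1)`, where
`R(r) = ⌈C₁(ζ)(log(C₀γ(r)))²⌉`) still grows super-algebraically:
`γ̂(m) ≥ e^{(αm/C)^{1/3}}` for all `m ≥ R(1)`.
-/

/-- `R(r) = ⌈(4/(πζ)²)·(log(C₀ e^{αr}))²⌉`. -/
noncomputable def Rtemp (α ζ C0 : ℝ) (r : ℕ) : ℕ :=
  ⌈(4 / (Real.pi * ζ) ^ 2) * (Real.log (C0 * Real.exp (α * r))) ^ 2⌉₊

theorem tempered_sequence_exponential_growth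
    (α ζ C0 : ℝ) (hα : 0 < α) (hζ0 : 0 < ζ) (hζ2 : ζ ≤ 2) (hC0 : 8 ≤ C0) :
    ∃ C : ℝ, 0 < C ∧
      ∀ r : ℕ, 1 ≤ r → ∀ m : ℕ,
        r * Rtemp α ζ C0 r ≤ m → m < (r + 1) * Rtemp α ζ C0 (r + 1) →
        Real.exp ((α * m / C) ^ ((1 : ℝ) / 3)) ≤ Real.exp (α * r) := by
  have hπ : (0:ℝ) < Real.pi := Real.pi_pos
  have hC1 : (0:ℝ) < 4 / (Real.pi * ζ) ^ 2 := by positivity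
  have hlog : (0:ℝ) < Real.log C0 := Real.log_pos (by linarith)
  set C1 : ℝ := 4 / (Real.pi * ζ) ^ 2 with hC1def
  set B : ℝ := Real.log C0 + 2 * α with hBdef
  have hB : 0 < B := by positivity
  set K : ℝ := C1 * B ^ 2 + 1 with hKdef
  have hK : 0 < K := by positivity
  refine ⟨2 * K / α ^ 2, by positivity, ?_⟩
  intro r hr m _ hm2
  rw [Real.exp_le_exp]
  have hr1 : (1:ℝ) ≤ (r:ℝ) := by exact_mod_cast hr
  -- bound on R(r+1)
  have hL : Real.log (C0 * Real.exp (α * ((r:ℕ)+1 : ℕ))) = Real.log C0 + α * ((r:ℝ)+1) := by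
    rw [Real.log_mul (by linarith) (Real.exp_ne_zero _), Real.log_exp]
    push_cast
    ring
  have hLpos : 0 ≤ Real.log C0 + α * ((r:ℝ)+1) := by positivity
  have hLle : Real.log C0 + α * ((r:ℝ)+1) ≤ B * r := by
    rw [hBdef]
    nlinarith
  have hRle : (Rtemp α ζ C0 (r+1) : ℝ) ≤ C1 * (B * r) ^ 2 + 1 := by
    have h1 : (Rtemp α ζ C0 (r+1) : ℝ) < C1 * (Real.log C0 + α * ((r:ℝ)+1)) ^ 2 + 1 := by
      unfold Rtemp
      rw [hL]
      exact Nat.ceil_lt_add_one (by positivity)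
    have h2 : (Real.log C0 + α * ((r:ℝ)+1)) ^ 2 ≤ (B * r) ^ 2 :=
      pow_le_pow_left₀ hLpos hLle 2
    nlinarith
  -- bound on m
  have hmlt : (m:ℝ) < ((r:ℝ)+1) * (Rtemp α ζ C0 (r+1) : ℝ) := by
    have := hm2
    exact_mod_cast this
  have hmK : (m:ℝ) ≤ 2 * K * (r:ℝ) ^ 3 := by
    have h3 : C1 * (B * r) ^ 2 + 1 ≤ K * (r:ℝ)^2 := by
      rw [hKdef]; nlinarith [mul_nonneg hC1.le (sq_nonneg B), hr1]
    have h4 : ((r:ℝ)+1) ≤ 2 * r := by linarith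
    have h5 : (0:ℝ) ≤ (Rtemp α ζ C0 (r+1) : ℝ) := Nat.cast_nonneg _
    have hb : ((r:ℝ)+1) * (Rtemp α ζ C0 (r+1) : ℝ) ≤ 2 * K * (r:ℝ) ^ 3 :=
      calc ((r:ℝ)+1) * (Rtemp α ζ C0 (r+1) : ℝ)
          ≤ (2*(r:ℝ)) * (C1 * (B * r) ^ 2 + 1) :=
            mul_le_mul h4 hRle h5 (by positivity)
        _ ≤ (2*(r:ℝ)) * (K * (r:ℝ)^2) :=
            mul_le_mul_of_nonneg_left h3 (by positivity)
        _ = 2 * K * (r:ℝ) ^ 3 := by ring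
    exact hmlt.le.trans hb
  -- final: (α m / C)^{1/3} ≤ α r
  have hcube : α * m / (2 * K / α ^ 2) ≤ (α * r) ^ (3:ℕ) := by
    rw [div_le_iff₀ (by positivity)]
    have : (α * r)^(3:ℕ) * (2 * K / α ^ 2) = 2 * K * α * (r:ℝ)^3 := by
      field_simp
    rw [this]
    nlinarith [mul_le_mul_of_nonneg_left hmK hα.le]
  have h0 : (0:ℝ) ≤ α * m / (2 * K / α ^ 2) := by positivity
  calc (α * m / (2 * K / α ^ 2)) ^ ((1:ℝ)/3)
      ≤ ((α * r) ^ (3:ℕ)) ^ ((1:ℝ)/3) :=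
        Real.rpow_le_rpow h0 hcube (by norm_num)
    _ = α * r := by
        rw [← Real.rpow_natCast (α * r) 3, ← Real.rpow_mul (by positivity)]
        norm_num
end
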